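/- arXiv:2304.06620 — 4 statements merged into one kernel-verified Lean document; each statement's English description precedes it below -/
import Mathlib

section
/- For all natural numbers m, n with m, n both odd and m + n ≡ 2 (mod 8), and with max{m,n} < 3·min{m,n} − 2: if p rows, p columns, p sum diagonals and p difference diagonals cover the m × n board, then p ≥ (m+n−2)/4 + 1. -/
open Polynomial Finset


noncomputable def wt (T : Finset ℚ) (x : ℚ) : ℚ := (∏ z ∈ T.erase x, (x - z))⁻¹

lemma coeff_basis (T : Finset ℚ) (q : ℕ) (hT : T.card = q + 1) {x : ℚ} (hx : x ∈ T) :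
    (Lagrange.basis T id x).coeff q = wt T x := by
  have hinj : Set.InjOn (id : ℚ → ℚ) T := Function.injective_id.injOn
  have hnd : (Lagrange.basis T id x).natDegree = q := by
    rw [Lagrange.natDegree_basis hinj hx, hT]; simp
  have hlc : (Lagrange.basis T id x).leadingCoeff = wt T x := by
    rw [Lagrange.basis, leadingCoeff_prod]
    rw [wt, ← Finset.prod_inv_distrib]
    refine Finset.prod_congr rfl fun z hz => ?_
    have hne : (x : ℚ) ≠ z := by
      rcases Finset.mem_erase.mp hz with ⟨h1, _⟩
      exact fun h => h1 (by simpa using h.symm)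
    rw [Lagrange.basisDivisor, leadingCoeff_mul, leadingCoeff_C,
      leadingCoeff_X_sub_C, mul_one]
    rfl
  rw [← hnd, coeff_natDegree, hlc]

lemma functional_eq_coeff (T : Finset ℚ) (q : ℕ) (hT : T.card = q + 1)
    (f : ℚ[X]) (hf : f.natDegree ≤ q) :
    ∑ x ∈ T, wt T x * f.eval x = f.coeff q := by
  have hinj : Set.InjOn (id : ℚ → ℚ) T := Function.injective_id.injOn
  have hdeg : f.degree < T.card := by
    rw [hT]
    calc f.degree ≤ (f.natDegree : WithBot ℕ) := degree_le_natDegree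
    _ < ((q+1 : ℕ) : WithBot ℕ) := by exact_mod_cast Nat.lt_succ_of_le hf
  have hrep := Lagrange.eq_interpolate hinj hdeg
  conv_rhs => rw [hrep]
  rw [Lagrange.interpolate_apply, finset_sum_coeff]
  refine Finset.sum_congr rfl fun x hx => ?_
  rw [coeff_C_mul, coeff_basis T q hT hx, id, mul_comm]


noncomputable def fac (γ ε : ℚ) : (Polynomial (ℚ))[X] := C (X - C γ) + C (C ε) * X

noncomputable def PP (l : List (ℚ × ℚ)) : (Polynomial ℚ)[X] := (l.map fun p => fac p.1 p.2).prod

noncomputable def gg (l : List (ℚ × ℚ)) : ℚ[X] := (l.map fun p => 1 + C p.2 * X).prod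

lemma coeff_X_mul' {R : Type*} [Semiring R] (f : R[X]) (j : ℕ) :
    (X * f).coeff j = (if j = 0 then 0 else f.coeff (j-1)) := by
  cases j with
  | zero => simp [mul_coeff_zero]
  | succ u => simp [coeff_X_mul]

lemma coeff_fac_mul (γ ε : ℚ) (P : (Polynomial ℚ)[X]) (j : ℕ) :
    (fac γ ε * P).coeff j
      = (X - C γ) * P.coeff j + C ε * (if j = 0 then 0 else P.coeff (j-1)) := by
  rw [fac, add_mul, coeff_add, coeff_C_mul, mul_assoc, coeff_C_mul, coeff_X_mul']

lemma coeff_XsubC_mul (γ : ℚ) (f : ℚ[X]) (i : ℕ) :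
    ((X - C γ) * f).coeff i = (if i = 0 then 0 else f.coeff (i-1)) - γ * f.coeff i := by
  rw [sub_mul, coeff_sub, coeff_C_mul, coeff_X_mul']

lemma gg_cons (γ ε : ℚ) (l : List (ℚ × ℚ)) :
    gg ((γ, ε) :: l) = (1 + C ε * X) * gg l := by
  simp [gg]

lemma PP_cons (γ ε : ℚ) (l : List (ℚ × ℚ)) :
    PP ((γ, ε) :: l) = fac γ ε * PP l := by
  simp [PP]

lemma gg_natDegree_le (l : List (ℚ × ℚ)) : (gg l).natDegree ≤ l.length := by
  refine le_trans (natDegree_list_prod_le _) ?_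
  rw [List.map_map]
  refine le_trans (List.sum_le_card_nsmul _ 1 ?_) (by simp)
  intro x hx
  simp only [List.mem_map, Function.comp] at hx
  obtain ⟨p, _, rfl⟩ := hx
  refine le_trans (natDegree_add_le _ _) ?_
  simp [natDegree_C_mul_le]
  exact le_trans (natDegree_C_mul_le _ _) (by simp)

lemma gg_coeff_hi (l : List (ℚ × ℚ)) {j : ℕ} (hj : l.length < j) : (gg l).coeff j = 0 :=
  coeff_eq_zero_of_natDegree_lt (lt_of_le_of_lt (gg_natDegree_le l) hj)

lemma phi (l : List (ℚ × ℚ)) :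
    (∀ i j, l.length < i + j → ((PP l).coeff j).coeff i = 0) ∧
    (∀ i j, i + j = l.length → ((PP l).coeff j).coeff i = (gg l).coeff j) := by
  induction l with
  | nil =>
      constructor
      · intro i j h
        simp only [PP, List.map_nil, List.prod_nil, coeff_one]
        rcases Nat.eq_zero_or_pos j with rfl | hj
        · simp only [List.length_nil, add_zero] at h
          simp [coeff_one, Nat.pos_iff_ne_zero.mp h]
        · simp [coeff_one, Nat.pos_iff_ne_zero.mp hj]
      · intro i j h
        simp only [List.length_nil, Nat.add_eq_zero] at h
        obtain ⟨rfl, rfl⟩ := h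
        simp [PP, gg]
  | cons hd tl ih =>
      obtain ⟨γ, ε⟩ := hd
      obtain ⟨ih1, ih2⟩ := ih
      constructor
      · intro i j h
        simp only [List.length_cons] at h
        rw [PP_cons, coeff_fac_mul, coeff_add, coeff_XsubC_mul, coeff_C_mul]
        cases j with
        | zero =>
            simp only [if_pos rfl, mul_zero, coeff_zero, add_zero]
            cases i with
            | zero => omega
            | succ u =>
                rw [if_neg (Nat.succ_ne_zero u)]
                rw [ih1 (u+1-1) 0 (by omega), ih1 (u+1) 0 (by omega)]
                simp
        | succ t =>
            rw [if_neg (Nat.succ_ne_zero t)]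
            cases i with
            | zero =>
                rw [if_pos rfl, ih1 0 (t+1) (by omega), ih1 0 (t+1-1) (by omega)]
                simp
            | succ u =>
                rw [if_neg (Nat.succ_ne_zero u)]
                rw [ih1 (u+1-1) (t+1) (by omega), ih1 (u+1) (t+1) (by omega),
                  ih1 (u+1) (t+1-1) (by omega)]
                simp
      · intro i j h
        simp only [List.length_cons] at h
        rw [PP_cons, coeff_fac_mul, coeff_add, coeff_XsubC_mul, coeff_C_mul, gg_cons]
        rw [add_mul, one_mul, coeff_add, mul_assoc, coeff_C_mul, coeff_X_mul']
        cases j with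
        | zero =>
            simp only [if_pos rfl, mul_zero, coeff_zero, add_zero]
            cases i with
            | zero => omega
            | succ u =>
                have hu : u = tl.length := by omega
                rw [if_neg (Nat.succ_ne_zero u), Nat.add_sub_cancel]
                rw [ih1 (u+1) 0 (by omega), ih2 u 0 (by omega)]
                simp
        | succ t =>
            rw [if_neg (Nat.succ_ne_zero t), if_neg (Nat.succ_ne_zero t),
              Nat.add_sub_cancel]
            cases i with
            | zero =>
                have ht : t = tl.length := by omega
                rw [if_pos rfl, ih1 0 (t+1) (by omega), ih2 0 t (by omega)]
                rw [gg_coeff_hi tl (show tl.length < t+1 by omega)]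
                simp
            | succ u =>
                rw [if_neg (Nat.succ_ne_zero u), Nat.add_sub_cancel]
                rw [ih1 (u+1) (t+1) (by omega), ih2 u (t+1) (by omega),
                  ih2 (u+1) t (by omega)]
                simp [mul_comm]



noncomputable def gp (σ δ : ℕ) : ℚ[X] := (1 + X)^σ * (1 - X)^δ

lemma gp_coeff_zero (σ δ : ℕ) : (gp σ δ).coeff 0 = 1 := by
  rw [gp, coeff_zero_eq_eval_zero]
  simp

lemma mulA (σ : ℕ) : (1 + X : ℚ[X]) * derivative ((1+X)^σ) = C (σ:ℚ) * (1+X)^σ := by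
  rw [derivative_pow]
  cases σ with
  | zero => simp
  | succ t =>
      simp only [derivative_add, derivative_one, derivative_X, zero_add, mul_one,
        Nat.add_sub_cancel]
      ring
lemma mulB (δ : ℕ) : (1 - X : ℚ[X]) * derivative ((1-X)^δ) = -(C (δ:ℚ) * (1-X)^δ) := by
  rw [derivative_pow]
  cases δ with
  | zero => simp
  | succ t =>
      simp only [derivative_sub, derivative_one, derivative_X, zero_sub, mul_neg, mul_one,
        Nat.add_sub_cancel]
      ring

lemma gp_deriv (σ δ : ℕ) :
    (1 - X^2 : ℚ[X]) * derivative (gp σ δ)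
      = (C ((σ:ℚ) - δ) - C ((σ:ℚ) + δ) * X) * gp σ δ := by
  rw [gp, derivative_mul]
  have h1 : (1 - X^2 : ℚ[X]) = (1 - X) * (1 + X) := by ring
  have e1 : (1 - X^2 : ℚ[X]) * (derivative ((1+X)^σ) * (1-X)^δ)
      = ((1 - X) * ((1+X) * derivative ((1+X)^σ))) * (1-X)^δ := by rw [h1]; ring
  have e2 : (1 - X^2 : ℚ[X]) * ((1+X)^σ * derivative ((1-X)^δ))
      = ((1 + X) * ((1-X) * derivative ((1-X)^δ))) * (1+X)^σ := by rw [h1]; ring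
  rw [mul_add, e1, e2, mulA, mulB]
  simp only [map_sub, map_add]
  ring

lemma gp_rec (σ δ : ℕ) (j : ℕ) :
    ((j:ℚ)+2) * (gp σ δ).coeff (j+2) - (j:ℚ) * (gp σ δ).coeff j
      = ((σ:ℚ) - δ) * (gp σ δ).coeff (j+1) - ((σ:ℚ) + δ) * (gp σ δ).coeff j := by
  have h := congrArg (fun f : ℚ[X] => f.coeff (j+1)) (gp_deriv σ δ)
  rw [sub_mul, coeff_sub, one_mul, sub_mul, coeff_sub, coeff_C_mul,
    mul_assoc, coeff_C_mul, coeff_X_mul'] at h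
  rw [if_neg (Nat.succ_ne_zero j), Nat.add_sub_cancel] at h
  have hx2 : (X^2 * derivative (gp σ δ)).coeff (j+1)
      = (j:ℚ) * (gp σ δ).coeff j := by
    have : (X^2 : ℚ[X]) * derivative (gp σ δ) = X * (X * derivative (gp σ δ)) := by ring
    rw [this, coeff_X_mul', if_neg (Nat.succ_ne_zero j), Nat.add_sub_cancel, coeff_X_mul']
    cases j with
    | zero => simp
    | succ t =>
        rw [if_neg (Nat.succ_ne_zero t), Nat.add_sub_cancel, coeff_derivative]
        push_cast
        ring
  rw [hx2, coeff_derivative] at h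
  rw [show ((j:ℚ)+2) = ((j:ℚ)+1+1) by ring]
  rw [← h]
  push_cast
  ring

lemma gp_nz (σ δ : ℕ) : ∀ j, j + 1 ≤ σ + δ →
    ¬((gp σ δ).coeff j = 0 ∧ (gp σ δ).coeff (j+1) = 0) := by
  intro j
  induction j with
  | zero =>
      intro _ ⟨h0, _⟩
      rw [gp_coeff_zero] at h0
      exact one_ne_zero h0
  | succ t ih =>
      intro hle ⟨h1, h2⟩
      have hrec := gp_rec σ δ t
      rw [h1] at hrec
      rw [show t + 1 + 1 = t + 2 from rfl] at h2
      rw [h2] at hrec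
      have hz : ((σ:ℚ) + δ - t) * (gp σ δ).coeff t = 0 := by linarith
      have hne : ((σ:ℚ) + δ - t) ≠ 0 := by
        have : t < σ + δ := by omega
        have : (t:ℚ) < (σ:ℚ) + δ := by exact_mod_cast this
        linarith
      have h0 : (gp σ δ).coeff t = 0 := by
        rcases mul_eq_zero.mp hz with h | h
        · exact absurd h hne
        · exact h
      exact ih (by omega) ⟨h0, h1⟩

lemma one_add_X_eq : (1 + X : ℚ[X]) = X + C 1 := by rw [add_comm, C_1]
lemma one_sub_X_eq : (1 - X : ℚ[X]) = -(X - C 1) := by rw [C_1]; ring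

lemma gp_top (σ δ : ℕ) : (gp σ δ).coeff (σ + δ) = (-1:ℚ)^δ := by
  have hA : (1 + X:ℚ[X]).Monic := by rw [one_add_X_eq]; exact monic_X_add_C 1
  have hBne : (1 - X:ℚ[X]) ≠ 0 := by
    rw [one_sub_X_eq]; exact neg_ne_zero.mpr (monic_X_sub_C (1:ℚ)).ne_zero
  have hAne : (1 + X:ℚ[X]) ≠ 0 := hA.ne_zero
  have ndA : (1 + X:ℚ[X]).natDegree = 1 := by rw [one_add_X_eq]; exact natDegree_X_add_C 1
  have ndB : (1 - X:ℚ[X]).natDegree = 1 := by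
    rw [one_sub_X_eq, natDegree_neg]; exact natDegree_X_sub_C 1
  have nd : (gp σ δ).natDegree = σ + δ := by
    rw [gp, natDegree_mul (pow_ne_zero _ hAne) (pow_ne_zero _ hBne), natDegree_pow,
      natDegree_pow, ndA, ndB]
    ring
  have lcB : (1 - X:ℚ[X]).leadingCoeff = -1 := by
    rw [one_sub_X_eq, leadingCoeff_neg, (monic_X_sub_C (1:ℚ)).leadingCoeff]
  have hlc : (gp σ δ).leadingCoeff = (-1:ℚ)^δ := by
    rw [gp, leadingCoeff_mul, leadingCoeff_pow, leadingCoeff_pow, hA.leadingCoeff, lcB,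
      one_pow, one_mul]
  rw [← nd, coeff_natDegree, hlc]

lemma gp_even (N u : ℕ) (hu : u ≤ N) :
    (gp N N).coeff (2 * u) = (-1:ℚ)^u * (N.choose u) := by
  have hg : gp N N = (1 - X^2 : ℚ[X])^N := by
    rw [gp, ← mul_pow]
    congr 1
    ring
  rw [hg]
  have hb : (1 - X^2 : ℚ[X])^N = ∑ i ∈ Finset.range (N+1), C ((-1:ℚ)^i * N.choose i) * X^(2*i) := by
    rw [sub_eq_add_neg, add_comm, add_pow]
    refine Finset.sum_congr rfl fun i hi => ?_
    rw [neg_pow, one_pow, mul_one, ← pow_mul]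
    simp only [map_mul, map_pow, map_neg, map_one, C_eq_natCast]
    ring
  rw [hb, finset_sum_coeff]
  rw [Finset.sum_eq_single u]
  · rw [coeff_C_mul, coeff_X_pow, if_pos rfl, mul_one]
  · intro i _ hne
    rw [coeff_C_mul, coeff_X_pow, if_neg (by omega), mul_zero]
  · intro h
    exact absurd (Finset.mem_range.mpr (by omega)) h






noncomputable def mkl (Sf Df : Finset ℤ) : List (ℚ × ℚ) :=
  (Sf.toList.map fun s : ℤ => ((s:ℚ), (1:ℚ))) ++ (Df.toList.map fun d : ℤ => ((d:ℚ), (-1:ℚ)))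

lemma mkl_length (Sf Df : Finset ℤ) : (mkl Sf Df).length = Sf.card + Df.card := by
  simp [mkl]

lemma prod_map_pairs (L : List ℤ) (e : ℚ) :
    ((L.map fun s : ℤ => ((s:ℚ), e)).map fun p : ℚ × ℚ => 1 + C p.2 * X).prod
      = (1 + C e * X)^L.length := by
  induction L with
  | nil => simp
  | cons h t ih =>
      simp only [List.map_cons, List.prod_cons, List.length_cons, ih, pow_succ]
      ring

lemma gg_mkl (Sf Df : Finset ℤ) : gg (mkl Sf Df) = gp Sf.card Df.card := by
  rw [gg, mkl, List.map_append, List.prod_append, prod_map_pairs, prod_map_pairs,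
    Finset.length_toList, Finset.length_toList, gp]
  congr 1
  · congr 1
    simp
  · congr 1
    simp only [map_neg, map_one]
    ring

-- evaluation of PP at a covered point is zero
lemma PP_eval_zero (Sf Df : Finset ℤ) (x y : ℚ)
    (h : (∃ s ∈ Sf, x + y = (s:ℚ)) ∨ (∃ d ∈ Df, x - y = (d:ℚ))) :
    (((PP (mkl Sf Df)).eval (C y)).eval x) = 0 := by
  set φ : (Polynomial ℚ)[X] →+* ℚ := (evalRingHom x).comp (evalRingHom (C y)) with hφ
  have hev : ∀ Q : (Polynomial ℚ)[X], φ Q = (Q.eval (C y)).eval x := fun Q => rfl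
  rw [← hev, PP, ← List.prod_map_hom]
  apply List.prod_eq_zero
  rcases h with ⟨s, hs, hxy⟩ | ⟨d, hd, hxy⟩
  · refine List.mem_map.mpr ⟨((s:ℚ), (1:ℚ)), ?_, ?_⟩
    · exact List.mem_append_left _ (List.mem_map.mpr ⟨s, Finset.mem_toList.mpr hs, rfl⟩)
    · show φ (fac (s:ℚ) 1) = 0
      simp [hφ, fac]
      linarith
  · refine List.mem_map.mpr ⟨((d:ℚ), (-1:ℚ)), ?_, ?_⟩
    · exact List.mem_append_right _ (List.mem_map.mpr ⟨d, Finset.mem_toList.mpr hd, rfl⟩)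
    · show φ (fac (d:ℚ) (-1)) = 0
      simp [hφ, fac]
      linarith





lemma prod_natDegree_le {R : Type*} [CommSemiring R] (l : List R[X])
    (h : ∀ q ∈ l, q.natDegree ≤ 1) : l.prod.natDegree ≤ l.length := by
  refine le_trans (natDegree_list_prod_le _) ?_
  refine le_trans (List.sum_le_card_nsmul _ 1 ?_) (by simp)
  intro x hx
  obtain ⟨q, hq, rfl⟩ := List.mem_map.mp hx
  exact h q hq

lemma fac_natDegree_le (γ ε : ℚ) : (fac γ ε).natDegree ≤ 1 := by
  refine le_trans (natDegree_add_le _ _) ?_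
  simp only [natDegree_C, max_le_iff]
  refine ⟨Nat.zero_le 1, le_trans (natDegree_C_mul_le _ _) (by simp)⟩

lemma PP_natDegree_le (l : List (ℚ × ℚ)) : (PP l).natDegree ≤ l.length := by
  rw [PP]
  refine le_trans (prod_natDegree_le _ ?_) (by simp)
  intro q hq
  obtain ⟨p, _, rfl⟩ := List.mem_map.mp hq
  exact fac_natDegree_le _ _

lemma PPcoeff_natDegree_le (l : List (ℚ × ℚ)) (j : ℕ) :
    ((PP l).coeff j).natDegree ≤ l.length := by
  rw [natDegree_le_iff_coeff_eq_zero]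
  intro i hi
  exact (phi l).1 i j (by omega)

lemma ev_expand (l : List (ℚ × ℚ)) (x y : ℚ) :
    ((PP l).eval (C y)).eval x
      = ∑ j ∈ Finset.range (l.length+1),
          (∑ i ∈ Finset.range (l.length+1), ((PP l).coeff j).coeff i * x^i) * y^j := by
  rw [eval_eq_sum_range' (lt_of_le_of_lt (PP_natDegree_le l) (Nat.lt_succ_self _)) (C y)]
  rw [eval_finset_sum]
  refine Finset.sum_congr rfl fun j _ => ?_
  rw [eval_mul, eval_pow, eval_C]
  congr 1
  exact eval_eq_sum_range' (lt_of_le_of_lt (PPcoeff_natDegree_le l j) (Nat.lt_succ_self _)) x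








lemma HX_eval (T : Finset ℚ) (q i : ℕ) (hT : T.card = q+1) (hi : i ≤ q) :
    ∑ x ∈ T, wt T x * x^i = if q = i then 1 else 0 := by
  have h := functional_eq_coeff T q hT (X^i) (by simp [natDegree_X_pow, hi])
  simpa [eval_pow, coeff_X_pow] using h

lemma vanish_coeff (l : List (ℚ × ℚ)) (X1 Y1 : Finset ℚ) (a' b' : ℕ)
    (hX1 : X1.card = a' + 1) (hY1 : Y1.card = b' + 1)
    (hab : a' + b' = l.length)
    (hvan : ∀ x ∈ X1, ∀ y ∈ Y1, ((PP l).eval (C y)).eval x = 0) :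
    ((PP l).coeff b').coeff a' = 0 := by
  have hb'le : b' ≤ l.length := by omega
  have ha'le : a' ≤ l.length := by omega
  have key : ∑ j ∈ Finset.range (l.length+1), ∑ i ∈ Finset.range (l.length+1),
      ((PP l).coeff j).coeff i * (∑ x ∈ X1, wt X1 x * x^i) * (∑ y ∈ Y1, wt Y1 y * y^j)
      = ((PP l).coeff b').coeff a' := by
    rw [Finset.sum_eq_single b']
    · rw [Finset.sum_eq_single a']
      · rw [HX_eval X1 a' a' hX1 le_rfl, HX_eval Y1 b' b' hY1 le_rfl]
        simp
      · intro i _ hne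
        rcases lt_or_gt_of_ne hne with hlt | hgt
        · rw [HX_eval X1 a' i hX1 (le_of_lt hlt), if_neg (by omega)]
          ring
        · rw [(phi l).1 i b' (by omega)]
          ring
      · intro h
        exact absurd (Finset.mem_range.mpr (by omega)) h
    · intro j hj hne
      rcases lt_or_gt_of_ne hne with hlt | hgt
      · refine Finset.sum_eq_zero fun i _ => ?_
        rw [HX_eval Y1 b' j hY1 (le_of_lt hlt), if_neg (by omega)]
        ring
      · refine Finset.sum_eq_zero fun i _ => ?_
        rcases le_or_gt i a' with hi | hi
        · rcases lt_or_eq_of_le hi with hi' | rfl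
          · rw [HX_eval X1 a' i hX1 (le_of_lt hi'), if_neg (by omega)]
            ring
          · rw [(phi l).1 i j (by omega)]
            ring
        · rw [(phi l).1 i j (by omega)]
          ring
    · intro h
      exact absurd (Finset.mem_range.mpr (by omega)) h
  have zero : ∑ j ∈ Finset.range (l.length+1), ∑ i ∈ Finset.range (l.length+1),
      ((PP l).coeff j).coeff i * (∑ x ∈ X1, wt X1 x * x^i) * (∑ y ∈ Y1, wt Y1 y * y^j)
      = 0 := by
    calc ∑ j ∈ Finset.range (l.length+1), ∑ i ∈ Finset.range (l.length+1),
          ((PP l).coeff j).coeff i * (∑ x ∈ X1, wt X1 x * x^i) * (∑ y ∈ Y1, wt Y1 y * y^j)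
        = ∑ j ∈ Finset.range (l.length+1), ∑ i ∈ Finset.range (l.length+1),
            ∑ x ∈ X1, ∑ y ∈ Y1,
              wt X1 x * wt Y1 y * (((PP l).coeff j).coeff i * x^i * y^j) := by
          refine Finset.sum_congr rfl fun j _ => Finset.sum_congr rfl fun i _ => ?_
          rw [mul_assoc, Finset.sum_mul_sum, Finset.mul_sum]
          refine Finset.sum_congr rfl fun x _ => ?_
          rw [Finset.mul_sum]
          refine Finset.sum_congr rfl fun y _ => ?_
          ring
      _ = ∑ j ∈ Finset.range (l.length+1), ∑ x ∈ X1, ∑ i ∈ Finset.range (l.length+1),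
            ∑ y ∈ Y1, wt X1 x * wt Y1 y * (((PP l).coeff j).coeff i * x^i * y^j) := by
          exact Finset.sum_congr rfl fun j _ => Finset.sum_comm
      _ = ∑ x ∈ X1, ∑ j ∈ Finset.range (l.length+1), ∑ i ∈ Finset.range (l.length+1),
            ∑ y ∈ Y1, wt X1 x * wt Y1 y * (((PP l).coeff j).coeff i * x^i * y^j) := by
          exact Finset.sum_comm
      _ = ∑ x ∈ X1, ∑ j ∈ Finset.range (l.length+1), ∑ y ∈ Y1,
            ∑ i ∈ Finset.range (l.length+1),
              wt X1 x * wt Y1 y * (((PP l).coeff j).coeff i * x^i * y^j) := by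
          exact Finset.sum_congr rfl fun x _ => Finset.sum_congr rfl fun j _ => Finset.sum_comm
      _ = ∑ x ∈ X1, ∑ y ∈ Y1, ∑ j ∈ Finset.range (l.length+1),
            ∑ i ∈ Finset.range (l.length+1),
              wt X1 x * wt Y1 y * (((PP l).coeff j).coeff i * x^i * y^j) := by
          exact Finset.sum_congr rfl fun x _ => Finset.sum_comm
      _ = 0 := by
          refine Finset.sum_eq_zero fun x hx => Finset.sum_eq_zero fun y hy => ?_
          have hev := hvan x hx y hy
          rw [ev_expand] at hev
          have hpull : ∑ j ∈ Finset.range (l.length+1), ∑ i ∈ Finset.range (l.length+1),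
              wt X1 x * wt Y1 y * (((PP l).coeff j).coeff i * x^i * y^j)
              = wt X1 x * wt Y1 y * ∑ j ∈ Finset.range (l.length+1),
                  (∑ i ∈ Finset.range (l.length+1), ((PP l).coeff j).coeff i * x^i) * y^j := by
            rw [Finset.mul_sum]
            refine Finset.sum_congr rfl fun j _ => ?_
            rw [Finset.sum_mul, Finset.mul_sum]
          rw [hpull, hev, mul_zero]
  rw [key] at zero
  exact zero

/-- If `m, n` are odd, `m + n ≡ 2 [MOD 8]` and `max m n < 3 * min m n - 2`, then
any cover of the `m × n` board by `p` rows, `p` columns, `p` sum diagonals and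
`p` difference diagonals satisfies `p ≥ (m+n-2)/4 + 1`. -/
theorem relaxed_queens_rect_odd_improved (m n p : ℕ) (hm : Odd m) (hn : Odd n)
    (hmod : (m + n) % 8 = 2) (hnontriv : max m n < 3 * min m n - 2)
    (R C : Fin p → ℕ) (S D : Fin p → ℤ)
    (hcover : ∀ x y : ℕ, x < m → y < n →
      ∃ i : Fin p, y = R i ∨ x = C i ∨ (x : ℤ) + y = S i ∨ (x : ℤ) - y = D i) :
    p ≥ (m + n - 2) / 4 + 1 := by
  by_contra hcon
  push_neg at hcon
  set N := (m + n - 2) / 4 with hN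
  have hp : p ≤ N := by omega
  have hm2 : m % 2 = 1 := Nat.odd_iff.mp hm
  have hn2 : n % 2 = 1 := Nat.odd_iff.mp hn
  have hmins : n < 3 * m - 2 ∧ m < 3 * n - 2 := by
    rcases le_total m n with h | h
    · rw [max_eq_right h, min_eq_left h] at hnontriv
      constructor
      · exact hnontriv
      · omega
    · rw [max_eq_left h, min_eq_right h] at hnontriv
      constructor
      · omega
      · exact hnontriv
  obtain ⟨hlt1, hlt2⟩ := hmins
  have hsum : m + n = 4 * N + 2 := by omega
  have hNeven : N % 2 = 0 := by omega
  have hmN : N + 2 ≤ m := by omega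
  have hnN : N + 2 ≤ n := by omega
  classical
  -- the used values
  set Cimg : Finset ℕ := Finset.image C Finset.univ with hCimg
  set Rimg : Finset ℕ := Finset.image R Finset.univ with hRimg
  set Simg : Finset ℤ := Finset.image S Finset.univ with hSimg
  set Dimg : Finset ℤ := Finset.image D Finset.univ with hDimg
  have hCc : Cimg.card ≤ p := le_trans (Finset.card_image_le) (by simp)
  have hRc : Rimg.card ≤ p := le_trans (Finset.card_image_le) (by simp)
  have hSc : Simg.card ≤ p := le_trans (Finset.card_image_le) (by simp)
  have hDc : Dimg.card ≤ p := le_trans (Finset.card_image_le) (by simp)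
  set Xs : Finset ℕ := Finset.range m \ Cimg with hXs
  set Ys : Finset ℕ := Finset.range n \ Rimg with hYs
  set a := Xs.card with ha
  set b := Ys.card with hb
  have hage : m - p ≤ a := by
    calc m - p ≤ (Finset.range m).card - Cimg.card := by
          rw [Finset.card_range]; omega
    _ ≤ a := Finset.le_card_sdiff _ _
  have hbge : n - p ≤ b := by
    calc n - p ≤ (Finset.range n).card - Rimg.card := by
          rw [Finset.card_range]; omega
    _ ≤ b := Finset.le_card_sdiff _ _
  have hale : a ≤ m := le_trans (Finset.card_le_card (Finset.sdiff_subset)) (by simp)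
  have hble : b ≤ n := le_trans (Finset.card_le_card (Finset.sdiff_subset)) (by simp)
  set σ := Simg.card with hσ
  set δ := Dimg.card with hδ
  set k := σ + δ with hkdef
  have hk2p : k ≤ 2 * p := by omega
  have habk : k + 2 ≤ a + b := by omega
  -- choose the target bidegree (a', b') with nonzero coefficient
  have hchoice : ∃ a' b', a' + 1 ≤ a ∧ b' + 1 ≤ b ∧ a' + b' = k ∧ (gp σ δ).coeff b' ≠ 0 := by
    rcases le_or_gt (k+1) a with hc1 | hc1
    · exact ⟨k, 0, hc1, by omega, by omega, by rw [gp_coeff_zero]; norm_num⟩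
    rcases le_or_gt (k+1) b with hc2 | hc2
    · refine ⟨0, k, by omega, hc2, by omega, ?_⟩
      rw [hkdef, gp_top]
      exact pow_ne_zero _ (by norm_num)
    rcases lt_or_eq_of_le habk with hc3 | hc4
    · -- k + 3 ≤ a + b : two consecutive coefficients available
      set w := k + 1 - a with hw
      have hw1 : 1 ≤ w := by omega
      have hwb : w + 1 + 1 ≤ b := by omega
      have hnz := gp_nz σ δ w (by omega)
      rcases not_and_or.mp hnz with h | h
      · exact ⟨k - w, w, by omega, by omega, by omega, h⟩
      · exact ⟨k - (w+1), w + 1, by omega, by omega, by omega, h⟩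
    · -- equality case
      have hpN : p = N ∧ σ = N ∧ δ = N ∧ b = n - N := by omega
      obtain ⟨hpN', hσN, hδN, hbN⟩ := hpN
      have hbodd : (b - 1) % 2 = 0 := by omega
      set u := (b-1)/2 with hu
      have hbu : b - 1 = 2 * u := by omega
      have huN : u ≤ N := by omega
      refine ⟨a - 1, b - 1, by omega, by omega, by omega, ?_⟩
      rw [hσN, hδN, hbu, gp_even N u huN]
      have : (N.choose u : ℚ) ≠ 0 := by
        exact_mod_cast Nat.pos_iff_ne_zero.mp (Nat.choose_pos huN)
      positivity
  obtain ⟨a', b', ha', hb', hab', hnz⟩ := hchoice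
  -- build the rational point sets
  set Xq : Finset ℚ := Xs.image (fun t : ℕ => (t : ℚ)) with hXq
  set Yq : Finset ℚ := Ys.image (fun t : ℕ => (t : ℚ)) with hYq
  have hXqc : Xq.card = a := Finset.card_image_of_injective _ (Nat.cast_injective)
  have hYqc : Yq.card = b := Finset.card_image_of_injective _ (Nat.cast_injective)
  obtain ⟨X1, hX1sub, hX1c⟩ := Finset.exists_subset_card_eq (s := Xq) (n := a'+1) (by omega)
  obtain ⟨Y1, hY1sub, hY1c⟩ := Finset.exists_subset_card_eq (s := Yq) (n := b'+1) (by omega)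
  -- vanishing on the grid
  have hvan : ∀ x ∈ X1, ∀ y ∈ Y1, ((PP (mkl Simg Dimg)).eval (Polynomial.C y)).eval x = 0 := by
    intro x hx y hy
    obtain ⟨x0, hx0mem, rfl⟩ := Finset.mem_image.mp (hX1sub hx)
    obtain ⟨y0, hy0mem, rfl⟩ := Finset.mem_image.mp (hY1sub hy)
    rw [hXs, Finset.mem_sdiff, Finset.mem_range] at hx0mem
    rw [hYs, Finset.mem_sdiff, Finset.mem_range] at hy0mem
    obtain ⟨i, hi⟩ := hcover x0 y0 hx0mem.1 hy0mem.1
    apply PP_eval_zero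
    rcases hi with h | h | h | h
    · exact absurd (Finset.mem_image.mpr ⟨i, Finset.mem_univ i, h.symm⟩) hy0mem.2
    · exact absurd (Finset.mem_image.mpr ⟨i, Finset.mem_univ i, h.symm⟩) hx0mem.2
    · refine Or.inl ⟨S i, Finset.mem_image.mpr ⟨i, Finset.mem_univ i, rfl⟩, ?_⟩
      have := congrArg (fun t : ℤ => (t : ℚ)) h
      push_cast at this ⊢
      linarith
    · refine Or.inr ⟨D i, Finset.mem_image.mpr ⟨i, Finset.mem_univ i, rfl⟩, ?_⟩
      have := congrArg (fun t : ℤ => (t : ℚ)) h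
      push_cast at this ⊢
      linarith
  have hzero := vanish_coeff (mkl Simg Dimg) X1 Y1 a' b' hX1c hY1c
      (by rw [mkl_length]; omega) hvan
  have hval := (phi (mkl Simg Dimg)).2 a' b' (by rw [mkl_length]; omega)
  rw [hzero] at hval
  rw [gg_mkl] at hval
  exact hnz hval.symm
end

section
/- Suppose n = 4k+3 and p = 2k+1 rows, p columns, p sum diagonals and p difference diagonals cover the n × n board. Then the p chosen rows are pairwise distinct, the p chosen columns are pairwise distinct, the p chosen sum diagonals are pairwise distinct, and the p chosen difference diagonals are pairwise distinct. -/
set_option maxHeartbeats 1000000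

open Finset

/-- Core counting lemma: if a grid `X ×ˢ Y` (with `|X|, |Y| ≥ 2`) is covered by
sum-diagonals `S` and difference-diagonals `D`, then `|X| + |Y| ≤ |S| + |D| + 2`. -/
private lemma cover_lemma (X Y S D : Finset ℤ) (hX : 2 ≤ X.card) (hY : 2 ≤ Y.card)
    (hcov : ∀ x ∈ X, ∀ y ∈ Y, x + y ∈ S ∨ x - y ∈ D) :
    X.card + Y.card ≤ S.card + D.card + 2 := by
  classical
  have hXne : X.Nonempty := card_pos.mp (by omega)
  have hYne : Y.Nonempty := card_pos.mp (by omega)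
  set x0 := X.min' hXne with hx0
  set x1 := X.max' hXne with hx1
  set y0 := Y.min' hYne with hy0
  set y1 := Y.max' hYne with hy1
  have hx01 : x0 < x1 := X.min'_lt_max'_of_card (by omega)
  have hy01 : y0 < y1 := Y.min'_lt_max'_of_card (by omega)
  set E := (X ×ˢ Y).filter (fun p => p.1 = x0 ∨ p.1 = x1 ∨ p.2 = y0 ∨ p.2 = y1) with hE
  set f : ℤ × ℤ → ℤ ⊕ ℤ :=
    fun p => if p.1 + p.2 ∈ S then Sum.inl (p.1 + p.2) else Sum.inr (p.1 - p.2) with hf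
  have hfE : ∀ p ∈ E, f p ∈ S.disjSum D := by
    intro p hp
    simp only [hE, mem_filter, mem_product] at hp
    by_cases h : p.1 + p.2 ∈ S
    · simp [hf, h]
    · have := hcov p.1 hp.1.1 p.2 hp.1.2
      simp only [hf, h, if_false, mem_disjSum]
      tauto
  have hcount := Finset.card_eq_sum_card_fiberwise hfE
  have hmem : ∀ l : ℤ ⊕ ℤ, ∀ p ∈ E.filter fun p => f p = l,
      x0 ≤ p.1 ∧ p.1 ≤ x1 ∧ y0 ≤ p.2 ∧ p.2 ≤ y1 ∧
        (p.1 = x0 ∨ p.1 = x1 ∨ p.2 = y0 ∨ p.2 = y1) := by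
    intro l p hp
    simp only [mem_filter, hE, mem_product] at hp
    exact ⟨X.min'_le _ hp.1.1.1, X.le_max' _ hp.1.1.1,
      Y.min'_le _ hp.1.1.2, Y.le_max' _ hp.1.1.2, hp.1.2⟩
  have hfib : ∀ l ∈ S.disjSum D, (E.filter fun p => f p = l).card ≤ 2 := by
    rintro (s | t) _
    · -- sum diagonal
      have hdiag : ∀ p ∈ E.filter fun p => f p = Sum.inl s, p.1 + p.2 = s := by
        intro p hp
        have hp2 := (mem_filter.mp hp).2
        by_cases h : p.1 + p.2 ∈ S
        · simpa [hf, h] using hp2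
        · simp [hf, h] at hp2
      have hA : ((E.filter fun p => f p = Sum.inl s).filter
          fun p => p.1 = x0 ∨ p.2 = y1).card ≤ 1 := by
        rw [card_le_one]
        intro p hp q hq
        have h1 := hmem _ p (mem_of_mem_filter p hp)
        have h2 := hmem _ q (mem_of_mem_filter q hq)
        have d1 := hdiag p (mem_of_mem_filter p hp)
        have d2 := hdiag q (mem_of_mem_filter q hq)
        have e1 := (mem_filter.mp hp).2
        have e2 := (mem_filter.mp hq).2
        have : p.1 = q.1 ∧ p.2 = q.2 := by omega
        exact Prod.ext this.1 this.2
      have hB : ((E.filter fun p => f p = Sum.inl s).filter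
          fun p => p.1 = x1 ∨ p.2 = y0).card ≤ 1 := by
        rw [card_le_one]
        intro p hp q hq
        have h1 := hmem _ p (mem_of_mem_filter p hp)
        have h2 := hmem _ q (mem_of_mem_filter q hq)
        have d1 := hdiag p (mem_of_mem_filter p hp)
        have d2 := hdiag q (mem_of_mem_filter q hq)
        have e1 := (mem_filter.mp hp).2
        have e2 := (mem_filter.mp hq).2
        have : p.1 = q.1 ∧ p.2 = q.2 := by omega
        exact Prod.ext this.1 this.2
      have hsub : (E.filter fun p => f p = Sum.inl s) ⊆
          ((E.filter fun p => f p = Sum.inl s).filter fun p => p.1 = x0 ∨ p.2 = y1) ∪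
          ((E.filter fun p => f p = Sum.inl s).filter fun p => p.1 = x1 ∨ p.2 = y0) := by
        intro p hp
        have h := (hmem _ p hp).2.2.2.2
        obtain ⟨hpE, hpf⟩ := mem_filter.mp hp
        simp only [mem_union, mem_filter]
        tauto
      calc (E.filter fun p => f p = Sum.inl s).card ≤ _ := card_le_card hsub
        _ ≤ _ := card_union_le _ _
        _ ≤ 2 := by omega
    · -- difference diagonal
      have hdiag : ∀ p ∈ E.filter fun p => f p = Sum.inr t, p.1 - p.2 = t := by
        intro p hp
        have hp2 := (mem_filter.mp hp).2
        by_cases h : p.1 + p.2 ∈ S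
        · simp [hf, h] at hp2
        · simpa [hf, h] using hp2
      have hA : ((E.filter fun p => f p = Sum.inr t).filter
          fun p => p.1 = x0 ∨ p.2 = y0).card ≤ 1 := by
        rw [card_le_one]
        intro p hp q hq
        have h1 := hmem _ p (mem_of_mem_filter p hp)
        have h2 := hmem _ q (mem_of_mem_filter q hq)
        have d1 := hdiag p (mem_of_mem_filter p hp)
        have d2 := hdiag q (mem_of_mem_filter q hq)
        have e1 := (mem_filter.mp hp).2
        have e2 := (mem_filter.mp hq).2
        have : p.1 = q.1 ∧ p.2 = q.2 := by omega
        exact Prod.ext this.1 this.2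
      have hB : ((E.filter fun p => f p = Sum.inr t).filter
          fun p => p.1 = x1 ∨ p.2 = y1).card ≤ 1 := by
        rw [card_le_one]
        intro p hp q hq
        have h1 := hmem _ p (mem_of_mem_filter p hp)
        have h2 := hmem _ q (mem_of_mem_filter q hq)
        have d1 := hdiag p (mem_of_mem_filter p hp)
        have d2 := hdiag q (mem_of_mem_filter q hq)
        have e1 := (mem_filter.mp hp).2
        have e2 := (mem_filter.mp hq).2
        have : p.1 = q.1 ∧ p.2 = q.2 := by omega
        exact Prod.ext this.1 this.2
      have hsub : (E.filter fun p => f p = Sum.inr t) ⊆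
          ((E.filter fun p => f p = Sum.inr t).filter fun p => p.1 = x0 ∨ p.2 = y0) ∪
          ((E.filter fun p => f p = Sum.inr t).filter fun p => p.1 = x1 ∨ p.2 = y1) := by
        intro p hp
        have h := (hmem _ p hp).2.2.2.2
        obtain ⟨hpE, hpf⟩ := mem_filter.mp hp
        simp only [mem_union, mem_filter]
        tauto
      calc (E.filter fun p => f p = Sum.inr t).card ≤ _ := card_le_card hsub
        _ ≤ _ := card_union_le _ _
        _ ≤ 2 := by omega
  have hEupper : E.card ≤ 2 * (S.card + D.card) := by
    rw [hcount]
    calc ∑ l ∈ S.disjSum D, (E.filter fun p => f p = l).card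
        ≤ ∑ _l ∈ S.disjSum D, 2 := Finset.sum_le_sum hfib
      _ = (S.card + D.card) * 2 := by
          rw [Finset.sum_const, card_disjSum, smul_eq_mul]
      _ = 2 * (S.card + D.card) := by ring
  -- lower bound on E.card
  have hx0X : x0 ∈ X := X.min'_mem hXne
  have hx1X : x1 ∈ X := X.max'_mem hXne
  have hy0Y : y0 ∈ Y := Y.min'_mem hYne
  have hy1Y : y1 ∈ Y := Y.max'_mem hYne
  set U1 := ({x0} : Finset ℤ) ×ˢ Y with hU1
  set U2 := ({x1} : Finset ℤ) ×ˢ Y with hU2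
  set U3 := (X \ {x0, x1}) ×ˢ ({y0} : Finset ℤ) with hU3
  set U4 := (X \ {x0, x1}) ×ˢ ({y1} : Finset ℤ) with hU4
  have hsubE : U1 ∪ U2 ∪ U3 ∪ U4 ⊆ E := by
    intro p hp
    simp only [hU1, hU2, hU3, hU4, mem_union, mem_product, mem_singleton, mem_sdiff,
      mem_insert] at hp
    simp only [hE, mem_filter, mem_product]
    rcases hp with ((⟨h1, h2⟩ | ⟨h1, h2⟩) | ⟨⟨h1, _⟩, h2⟩) | ⟨⟨h1, _⟩, h2⟩
    · exact ⟨⟨h1 ▸ hx0X, h2⟩, Or.inl h1⟩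
    · exact ⟨⟨h1 ▸ hx1X, h2⟩, Or.inr (Or.inl h1)⟩
    · exact ⟨⟨h1, h2 ▸ hy0Y⟩, Or.inr (Or.inr (Or.inl h2))⟩
    · exact ⟨⟨h1, h2 ▸ hy1Y⟩, Or.inr (Or.inr (Or.inr h2))⟩
  have d12 : Disjoint U1 U2 := by
    rw [Finset.disjoint_left]
    intro p hp1 hp2
    simp only [hU1, hU2, mem_product, mem_singleton] at hp1 hp2
    omega
  have d34 : Disjoint U3 U4 := by
    rw [Finset.disjoint_left]
    intro p hp1 hp2
    simp only [hU3, hU4, mem_product, mem_singleton] at hp1 hp2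
    omega
  have d1234 : Disjoint (U1 ∪ U2) (U3 ∪ U4) := by
    rw [Finset.disjoint_left]
    intro p hp1 hp2
    simp only [hU1, hU2, hU3, hU4, mem_union, mem_product, mem_singleton, mem_sdiff,
      mem_insert] at hp1 hp2
    rcases hp2 with ⟨⟨_, h⟩, _⟩ | ⟨⟨_, h⟩, _⟩ <;> rcases hp1 with ⟨h1, _⟩ | ⟨h1, _⟩ <;> tauto
  have hXd : (X \ {x0, x1}).card = X.card - 2 := by
    rw [card_sdiff_of_subset (by
      intro z hz
      simp only [mem_insert, mem_singleton] at hz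
      rcases hz with rfl | rfl
      · exact hx0X
      · exact hx1X)]
    congr 1
    rw [card_insert_of_notMem (by simp [hx01.ne]), card_singleton]
  have hU1c : U1.card = Y.card := by simp [hU1]
  have hU2c : U2.card = Y.card := by simp [hU2]
  have hU3c : U3.card = X.card - 2 := by simp [hU3, hXd]
  have hU4c : U4.card = X.card - 2 := by simp [hU4, hXd]
  have hElower : Y.card + Y.card + (X.card - 2) + (X.card - 2) ≤ E.card := by
    have c12 : (U1 ∪ U2).card = Y.card + Y.card := by
      rw [card_union_of_disjoint d12, hU1c, hU2c]
    have c34 : (U3 ∪ U4).card = (X.card - 2) + (X.card - 2) := by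
      rw [card_union_of_disjoint d34, hU3c, hU4c]
    have call : (U1 ∪ U2 ∪ U3 ∪ U4).card = Y.card + Y.card + ((X.card - 2) + (X.card - 2)) := by
      rw [union_assoc (U1 ∪ U2), card_union_of_disjoint d1234, c12, c34]
    have := card_le_card hsubE
    omega
  omega

private lemma card_image_big {α : Type*} [DecidableEq α] {n : ℕ} (f : Fin n → α)
    (h : (Finset.univ.image f).card = n) : Function.Injective f := by
  have h2 : (Finset.univ.image f).card = (Finset.univ : Finset (Fin n)).card := by
    rw [h, Finset.card_univ, Fintype.card_fin]
  have := Finset.card_image_iff.mp h2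
  rw [Finset.coe_univ] at this
  exact Set.injOn_univ.mp this

private lemma aux (k : ℕ) (R C : Fin (2 * k + 1) → ℕ) (S D : Fin (2 * k + 1) → ℤ)
    (hcover : ∀ x y : ℕ, x < 4 * k + 3 → y < 4 * k + 3 →
      ∃ i, y = R i ∨ x = C i ∨ (x : ℤ) + y = S i ∨ (x : ℤ) - y = D i)
    (RS CS SS DS : Finset ℤ)
    (hRS : ∀ i, ((R i : ℤ)) ∈ RS) (hCS : ∀ i, ((C i : ℤ)) ∈ CS)
    (hSS : ∀ i, S i ∈ SS) (hDS : ∀ i, D i ∈ DS)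
    (hRc : RS.card ≤ 2 * k + 1) (hCc : CS.card ≤ 2 * k + 1) :
    2 * (4 * k + 3) ≤ RS.card + CS.card + SS.card + DS.card + 2 := by
  classical
  set N := (Finset.range (4 * k + 3)).image (Nat.cast : ℕ → ℤ) with hN
  have hNcard : N.card = 4 * k + 3 := by
    rw [hN, Finset.card_image_of_injective _ (fun a b hab => by exact_mod_cast hab),
      Finset.card_range]
  set X := N \ CS with hXdef
  set Y := N \ RS with hYdef
  have hXc : 4 * k + 3 ≤ X.card + CS.card := by
    have h1 : N ⊆ X ∪ CS := by
      intro z hz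
      by_cases hzc : z ∈ CS
      · exact Finset.mem_union_right _ hzc
      · exact Finset.mem_union_left _ (Finset.mem_sdiff.mpr ⟨hz, hzc⟩)
    calc 4 * k + 3 = N.card := hNcard.symm
      _ ≤ (X ∪ CS).card := Finset.card_le_card h1
      _ ≤ X.card + CS.card := Finset.card_union_le _ _
  have hYc : 4 * k + 3 ≤ Y.card + RS.card := by
    have h1 : N ⊆ Y ∪ RS := by
      intro z hz
      by_cases hzc : z ∈ RS
      · exact Finset.mem_union_right _ hzc
      · exact Finset.mem_union_left _ (Finset.mem_sdiff.mpr ⟨hz, hzc⟩)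
    calc 4 * k + 3 = N.card := hNcard.symm
      _ ≤ (Y ∪ RS).card := Finset.card_le_card h1
      _ ≤ Y.card + RS.card := Finset.card_union_le _ _
  have hcov : ∀ x ∈ X, ∀ y ∈ Y, x + y ∈ SS ∨ x - y ∈ DS := by
    intro x hx y hy
    obtain ⟨hxN, hxC⟩ := Finset.mem_sdiff.mp hx
    obtain ⟨hyN, hyR⟩ := Finset.mem_sdiff.mp hy
    obtain ⟨a, ha, rfl⟩ := Finset.mem_image.mp hxN
    obtain ⟨b, hb, rfl⟩ := Finset.mem_image.mp hyN
    obtain ⟨i, h | h | h | h⟩ := hcover a b (Finset.mem_range.mp ha) (Finset.mem_range.mp hb)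
    · exact absurd (by rw [h]; exact hRS i) hyR
    · exact absurd (by rw [h]; exact hCS i) hxC
    · left; rw [h]; exact hSS i
    · right; rw [h]; exact hDS i
  have hmain := cover_lemma X Y SS DS (by omega) (by omega) hcov
  omega

/-- If `n = 4k+3` and `p = 2k+1` rows, columns, sum diagonals and difference
diagonals of the `n × n` board cover it, then the chosen rows are pairwise
distinct, and similarly for columns, sum diagonals and difference diagonals. -/
theorem relaxed_queens_4k3_distinct_lines (k : ℕ)
    (R C : Fin (2 * k + 1) → ℕ) (S D : Fin (2 * k + 1) → ℤ)
    (hR : ∀ i, R i < 4 * k + 3) (hC : ∀ i, C i < 4 * k + 3)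
    (hS : ∀ i, 0 ≤ S i ∧ S i ≤ 2 * (4 * k + 3) - 2)
    (hD : ∀ i, -((4 * k + 3 : ℤ) - 1) ≤ D i ∧ D i ≤ (4 * k + 3 : ℤ) - 1)
    (hcover : ∀ x y : ℕ, x < 4 * k + 3 → y < 4 * k + 3 →
      ∃ i, y = R i ∨ x = C i ∨ (x : ℤ) + y = S i ∨ (x : ℤ) - y = D i) :
    Function.Injective R ∧ Function.Injective C ∧
      Function.Injective S ∧ Function.Injective D := by
  classical
  set RS := Finset.univ.image (fun i => ((R i : ℤ))) with hRSdef
  set CS := Finset.univ.image (fun i => ((C i : ℤ))) with hCSdef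
  set SS := Finset.univ.image S with hSSdef
  set DS := Finset.univ.image D with hDSdef
  have hRSmem : ∀ i, ((R i : ℤ)) ∈ RS := fun i => Finset.mem_image_of_mem _ (Finset.mem_univ i)
  have hCSmem : ∀ i, ((C i : ℤ)) ∈ CS := fun i => Finset.mem_image_of_mem _ (Finset.mem_univ i)
  have hSSmem : ∀ i, S i ∈ SS := fun i => Finset.mem_image_of_mem _ (Finset.mem_univ i)
  have hDSmem : ∀ i, D i ∈ DS := fun i => Finset.mem_image_of_mem _ (Finset.mem_univ i)
  have hRSc : RS.card ≤ 2 * k + 1 := le_trans Finset.card_image_le (by simp)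
  have hCSc : CS.card ≤ 2 * k + 1 := le_trans Finset.card_image_le (by simp)
  have hSSc : SS.card ≤ 2 * k + 1 := le_trans Finset.card_image_le (by simp)
  have hDSc : DS.card ≤ 2 * k + 1 := le_trans Finset.card_image_le (by simp)
  have key := aux k R C S D hcover RS CS SS DS hRSmem hCSmem hSSmem hDSmem hRSc hCSc
  refine ⟨?_, ?_, ?_, ?_⟩
  · by_contra h
    have hne : RS.card ≠ 2 * k + 1 := by
      intro hcard
      exact h fun a b hab => (card_image_big _ hcard) (by rw [hab] : ((R a : ℤ)) = R b)
    omega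
  · by_contra h
    have hne : CS.card ≠ 2 * k + 1 := by
      intro hcard
      exact h fun a b hab => (card_image_big _ hcard) (by rw [hab] : ((C a : ℤ)) = C b)
    omega
  · by_contra h
    have hne : SS.card ≠ 2 * k + 1 := by
      intro hcard
      exact h (card_image_big _ hcard)
    omega
  · by_contra h
    have hne : DS.card ≠ 2 * k + 1 := by
      intro hcard
      exact h (card_image_big _ hcard)
    omega
end

section
/- Suppose n = 4k+3 and p = 2k+1 rows, p columns, p sum diagonals and p difference diagonals cover the n × n board. Let l, r be the leftmost and rightmost unchosen columns and b, t the bottommost and topmost unchosen rows. Then r − l = t − b, i.e., the sub-board bounded by the extreme unchosen rows and columns is square. -/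
/-- Key counting lemma: if a finset `Yf` of at least `p+1` "rows", all in `[b,t]`,
is such that for two "columns" `c₁ < c₂` with `c₁ + t < c₂ + b`, every cell
`(c, y)` with `c ∈ {c₁, c₂}` and `y ∈ Yf` lies on one of `p` sum diagonals `S`
or `p` difference diagonals `D`, then we get a contradiction. -/
private lemma relaxed_queens_aux (p : ℕ) (S D : Fin p → ℤ) (Yf : Finset ℕ)
    (hYcard : p + 1 ≤ Yf.card) (c₁ c₂ b t : ℕ)
    (hYb : ∀ y ∈ Yf, b ≤ y) (hYt : ∀ y ∈ Yf, y ≤ t)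
    (hlt : c₁ + t < c₂ + b)
    (hcov : ∀ y ∈ Yf, ∀ c ∈ ({c₁, c₂} : Finset ℕ),
      ∃ i, (c : ℤ) + y = S i ∨ (c : ℤ) - y = D i) : False := by
  classical
  have hc : c₁ ≠ c₂ := by
    obtain ⟨y₀, hy₀⟩ := Finset.card_pos.mp (by omega : 0 < Yf.card)
    have h1 := hYb y₀ hy₀; have h2 := hYt y₀ hy₀; omega
  set cells : Finset (ℕ × ℕ) := ({c₁, c₂} : Finset ℕ) ×ˢ Yf with hcells
  have hcard : cells.card = 2 * Yf.card := by
    rw [hcells, Finset.card_product, Finset.card_insert_of_notMem (by simp [hc]),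
      Finset.card_singleton]
  set f : ℕ × ℕ → ℤ ⊕ ℤ := fun q =>
    if ∃ i, (q.1 : ℤ) + q.2 = S i then Sum.inl ((q.1 : ℤ) + q.2)
    else Sum.inr ((q.1 : ℤ) - q.2) with hf
  set target : Finset (ℤ ⊕ ℤ) :=
    (Finset.univ.image S).map ⟨Sum.inl, Sum.inl_injective⟩ ∪
    (Finset.univ.image D).map ⟨Sum.inr, Sum.inr_injective⟩ with htarget
  have hmaps : ∀ q ∈ cells, f q ∈ target := by
    intro q hq
    obtain ⟨hq1, hq2⟩ := Finset.mem_product.mp hq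
    by_cases h : ∃ i, (q.1 : ℤ) + q.2 = S i
    · obtain ⟨i, hi⟩ := h
      have : f q = Sum.inl ((q.1 : ℤ) + q.2) := by
        rw [hf]; exact if_pos ⟨i, hi⟩
      rw [this, htarget]
      apply Finset.mem_union_left
      simp only [Finset.mem_map, Finset.mem_image, Function.Embedding.coeFn_mk]
      exact ⟨(q.1 : ℤ) + q.2, ⟨i, Finset.mem_univ i, hi.symm⟩, rfl⟩
    · obtain ⟨i, hi⟩ := hcov q.2 hq2 q.1 hq1
      rcases hi with hi | hi
      · exact absurd ⟨i, hi⟩ h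
      · have : f q = Sum.inr ((q.1 : ℤ) - q.2) := by
          rw [hf]; exact if_neg h
        rw [this, htarget]
        apply Finset.mem_union_right
        simp only [Finset.mem_map, Finset.mem_image, Function.Embedding.coeFn_mk]
        exact ⟨(q.1 : ℤ) - q.2, ⟨i, Finset.mem_univ i, hi.symm⟩, rfl⟩
  have hinj : Set.InjOn f cells := by
    intro q1 hq1 q2 hq2 hfq
    simp only [Finset.coe_mem, Finset.mem_coe] at hq1 hq2
    obtain ⟨hx1, hy1⟩ := Finset.mem_product.mp hq1
    obtain ⟨hx2, hy2⟩ := Finset.mem_product.mp hq2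
    have hx1' : q1.1 = c₁ ∨ q1.1 = c₂ := by
      simpa using hx1
    have hx2' : q2.1 = c₁ ∨ q2.1 = c₂ := by
      simpa using hx2
    have hb1 := hYb q1.2 hy1; have ht1 := hYt q1.2 hy1
    have hb2 := hYb q2.2 hy2; have ht2 := hYt q2.2 hy2
    rw [hf] at hfq
    simp only at hfq
    by_cases h1 : ∃ i, (q1.1 : ℤ) + q1.2 = S i <;>
      by_cases h2 : ∃ i, (q2.1 : ℤ) + q2.2 = S i
    · rw [if_pos h1, if_pos h2] at hfq
      have heq : (q1.1 : ℤ) + q1.2 = (q2.1 : ℤ) + q2.2 := Sum.inl_injective hfq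
      have : q1.1 = q2.1 ∧ q1.2 = q2.2 := by
        rcases hx1' with h | h <;> rcases hx2' with h' | h' <;> omega
      exact Prod.ext this.1 this.2
    · rw [if_pos h1, if_neg h2] at hfq
      exact absurd hfq (by simp)
    · rw [if_neg h1, if_pos h2] at hfq
      exact absurd hfq (by simp)
    · rw [if_neg h1, if_neg h2] at hfq
      have heq : (q1.1 : ℤ) - q1.2 = (q2.1 : ℤ) - q2.2 := Sum.inr_injective hfq
      have : q1.1 = q2.1 ∧ q1.2 = q2.2 := by
        rcases hx1' with h | h <;> rcases hx2' with h' | h' <;> omega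
      exact Prod.ext this.1 this.2
  have hle := Finset.card_le_card_of_injOn f hmaps hinj
  have htc : target.card ≤ p + p := by
    refine le_trans (Finset.card_union_le _ _) ?_
    have h1 : ((Finset.univ.image S).map
        (⟨Sum.inl, Sum.inl_injective⟩ : ℤ ↪ ℤ ⊕ ℤ)).card ≤ p := by
      rw [Finset.card_map]
      exact le_trans Finset.card_image_le (by simp)
    have h2 : ((Finset.univ.image D).map
        (⟨Sum.inr, Sum.inr_injective⟩ : ℤ ↪ ℤ ⊕ ℤ)).card ≤ p := by
      rw [Finset.card_map]
      exact le_trans Finset.card_image_le (by simp)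
    omega
  omega

/-- If `n = 4k+3` and `p = 2k+1` rows, columns, sum diagonals and difference
diagonals cover the `n × n` board, and `l, r` are the leftmost and rightmost
unchosen columns while `b, t` are the bottommost and topmost unchosen rows,
then `r - l = t - b`: the sub-board bounded by them is square. -/
theorem relaxed_queens_4k3_square_subboard (k : ℕ)
    (R C : Fin (2 * k + 1) → ℕ) (S D : Fin (2 * k + 1) → ℤ)
    (hR : ∀ i, R i < 4 * k + 3) (hC : ∀ i, C i < 4 * k + 3)
    (hcover : ∀ x y : ℕ, x < 4 * k + 3 → y < 4 * k + 3 →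
      ∃ i, y = R i ∨ x = C i ∨ (x : ℤ) + y = S i ∨ (x : ℤ) - y = D i)
    (l r b t : ℕ)
    (hl : IsLeast {x : ℕ | x < 4 * k + 3 ∧ ∀ i, C i ≠ x} l)
    (hr : IsGreatest {x : ℕ | x < 4 * k + 3 ∧ ∀ i, C i ≠ x} r)
    (hb : IsLeast {y : ℕ | y < 4 * k + 3 ∧ ∀ i, R i ≠ y} b)
    (ht : IsGreatest {y : ℕ | y < 4 * k + 3 ∧ ∀ i, R i ≠ y} t) :
    r - l = t - b := by
  classical
  obtain ⟨⟨hl1, hl2⟩, hlmin⟩ := hl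
  obtain ⟨⟨hr1, hr2⟩, hrmax⟩ := hr
  obtain ⟨⟨hb1, hb2⟩, hbmin⟩ := hb
  obtain ⟨⟨ht1, ht2⟩, htmax⟩ := ht
  have hlr : l ≤ r := hrmax ⟨hl1, hl2⟩
  have hbt : b ≤ t := htmax ⟨hb1, hb2⟩
  -- unchosen columns and rows as finsets
  set Xf : Finset ℕ := (Finset.range (4 * k + 3)).filter (fun x => ∀ i, C i ≠ x)
    with hXf
  set Yf : Finset ℕ := (Finset.range (4 * k + 3)).filter (fun y => ∀ i, R i ≠ y)
    with hYf
  have hXmem : ∀ x, x ∈ Xf ↔ x < 4 * k + 3 ∧ ∀ i, C i ≠ x := by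
    intro x; simp [hXf, Finset.mem_filter, Finset.mem_range]
  have hYmem : ∀ y, y ∈ Yf ↔ y < 4 * k + 3 ∧ ∀ i, R i ≠ y := by
    intro y; simp [hYf, Finset.mem_filter, Finset.mem_range]
  have hXcard : 2 * k + 2 ≤ Xf.card := by
    have hsub : Finset.range (4 * k + 3) ⊆ Xf ∪ Finset.univ.image C := by
      intro x hx
      rw [Finset.mem_range] at hx
      by_cases hx' : ∀ i, C i ≠ x
      · exact Finset.mem_union_left _ ((hXmem x).mpr ⟨hx, hx'⟩)
      · push_neg at hx'
        obtain ⟨i, hi⟩ := hx'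
        exact Finset.mem_union_right _ (Finset.mem_image.mpr ⟨i, Finset.mem_univ i, hi⟩)
    have h1 := Finset.card_le_card hsub
    have h2 := Finset.card_union_le Xf (Finset.univ.image C)
    have h3 : (Finset.univ.image C).card ≤ 2 * k + 1 :=
      le_trans Finset.card_image_le (by simp)
    rw [Finset.card_range] at h1
    omega
  have hYcard : 2 * k + 2 ≤ Yf.card := by
    have hsub : Finset.range (4 * k + 3) ⊆ Yf ∪ Finset.univ.image R := by
      intro y hy
      rw [Finset.mem_range] at hy
      by_cases hy' : ∀ i, R i ≠ y
      · exact Finset.mem_union_left _ ((hYmem y).mpr ⟨hy, hy'⟩)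
      · push_neg at hy'
        obtain ⟨i, hi⟩ := hy'
        exact Finset.mem_union_right _ (Finset.mem_image.mpr ⟨i, Finset.mem_univ i, hi⟩)
    have h1 := Finset.card_le_card hsub
    have h2 := Finset.card_union_le Yf (Finset.univ.image R)
    have h3 : (Finset.univ.image R).card ≤ 2 * k + 1 :=
      le_trans Finset.card_image_le (by simp)
    rw [Finset.card_range] at h1
    omega
  have hXl : ∀ x ∈ Xf, l ≤ x := fun x hx => hlmin ((hXmem x).mp hx)
  have hXr : ∀ x ∈ Xf, x ≤ r := fun x hx => hrmax ((hXmem x).mp hx)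
  have hYb : ∀ y ∈ Yf, b ≤ y := fun y hy => hbmin ((hYmem y).mp hy)
  have hYt : ∀ y ∈ Yf, y ≤ t := fun y hy => htmax ((hYmem y).mp hy)
  rcases lt_trichotomy (r + b) (l + t) with h | h | h
  · -- r - l < t - b : use the two extreme rows b, t and the unchosen columns
    exact (relaxed_queens_aux (2 * k + 1) S (fun i => -(D i)) Xf
      (by omega) b t l r hXl hXr (by omega)
      (by
        intro x hx c hc
        obtain ⟨hx1, hx2⟩ := (hXmem x).mp hx
        have hc' : c = b ∨ c = t := by simpa using hc
        have hc1 : c < 4 * k + 3 := by rcases hc' with h' | h' <;> omega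
        have hc2 : ∀ i, R i ≠ c := by
          rcases hc' with h' | h' <;> subst h' <;> assumption
        obtain ⟨i, hi⟩ := hcover x c hx1 hc1
        rcases hi with hi | hi | hi | hi
        · exact absurd hi.symm (hc2 i)
        · exact absurd hi.symm (hx2 i)
        · exact ⟨i, Or.inl (by linarith)⟩
        · exact ⟨i, Or.inr (show (c : ℤ) - x = -(D i) by linarith)⟩)).elim
  · omega
  · -- r - l > t - b : use the two extreme columns l, r and the unchosen rows
    exact (relaxed_queens_aux (2 * k + 1) S D Yf
      (by omega) l r b t hYb hYt (by omega)
      (by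
        intro y hy c hc
        obtain ⟨hy1, hy2⟩ := (hYmem y).mp hy
        have hc' : c = l ∨ c = r := by simpa using hc
        have hc1 : c < 4 * k + 3 := by rcases hc' with h' | h' <;> omega
        have hc2 : ∀ i, C i ≠ c := by
          rcases hc' with h' | h' <;> subst h' <;> assumption
        obtain ⟨i, hi⟩ := hcover c y hc1 hy1
        rcases hi with hi | hi | hi | hi
        · exact absurd hi.symm (hy2 i)
        · exact absurd hi.symm (hc2 i)
        · exact ⟨i, Or.inl hi⟩
        · exact ⟨i, Or.inr hi⟩)).elim
end

section
/- Suppose n = 4k+3 and p = 2k+1 rows, p columns, p sum diagonals and p difference diagonals cover the n × n board, with l, r the leftmost and rightmost unchosen columns and b, t the bottommost and topmost unchosen rows. Then the sum diagonal through cells (l, t) and (r, b) (i.e., with value l+t = r+b) is among the chosen sum diagonals, and of the remaining 2k chosen sum diagonals, exactly k have value greater than l+t and exactly k have value less than l+t. The analogous statement holds for the difference diagonal with value l−b = r−t. -/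
private lemma card_filter_sum_aux {α β : Type*} [Fintype α] [Fintype β]
    (PS : α → Prop) (PD : β → Prop) [DecidablePred PS] [DecidablePred PD]
    [DecidablePred (Sum.elim PS PD)] :
    (Finset.univ.filter (Sum.elim PS PD)).card
      = (Finset.univ.filter PS).card + (Finset.univ.filter PD).card := by
  rw [← Finset.card_disjSum]
  congr 1
  ext x
  cases x <;> simp [Finset.mem_disjSum]

private lemma card_filter_add_card_filter_le {m : ℕ} (P Q : Fin m → Prop)
    [DecidablePred P] [DecidablePred Q] (h : ∀ i, P i → Q i → False) :
    (Finset.univ.filter P).card + (Finset.univ.filter Q).card ≤ m := by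
  have hd : Disjoint (Finset.univ.filter P) (Finset.univ.filter Q) := by
    rw [Finset.disjoint_left]
    intro i h1 h2
    rw [Finset.mem_filter] at h1 h2
    exact h i h1.2 h2.2
  calc (Finset.univ.filter P).card + (Finset.univ.filter Q).card
      = ((Finset.univ.filter P) ∪ (Finset.univ.filter Q)).card :=
        (Finset.card_union_of_disjoint hd).symm
    _ ≤ (Finset.univ : Finset (Fin m)).card := Finset.card_le_univ _
    _ = m := by simp

private lemma card_filter_add_card_filter_eq {m : ℕ} (P Q : Fin m → Prop)
    [DecidablePred P] [DecidablePred Q] (h : ∀ i, P i ↔ ¬ Q i) :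
    (Finset.univ.filter P).card + (Finset.univ.filter Q).card = m := by
  have h1 : Finset.univ.filter P = Finset.univ.filter (fun i => ¬ Q i) := by
    apply Finset.filter_congr
    intro i _
    exact h i
  rw [h1, add_comm]
  rw [Finset.card_filter_add_card_filter_not]
  simp

private lemma card_filter_le_add_card_filter_ge {m : ℕ} (v : ℤ) (F : Fin m → ℤ) :
    (Finset.univ.filter (fun i => F i ≤ v)).card
      + (Finset.univ.filter (fun i => v ≤ F i)).card
      = m + (Finset.univ.filter (fun i => F i = v)).card := by
  have hu : (Finset.univ.filter (fun i => F i ≤ v)) ∪ (Finset.univ.filter (fun i => v ≤ F i))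
      = Finset.univ := by
    rw [← Finset.filter_or]
    apply Finset.filter_true_of_mem
    intro i _
    exact le_total _ _
  have hi : (Finset.univ.filter (fun i => F i ≤ v)) ∩ (Finset.univ.filter (fun i => v ≤ F i))
      = Finset.univ.filter (fun i => F i = v) := by
    rw [← Finset.filter_and]
    apply Finset.filter_congr
    intro i _
    constructor
    · intro hh; omega
    · intro hh; omega
  have := Finset.card_union_add_card_inter
    (Finset.univ.filter (fun i => F i ≤ v)) (Finset.univ.filter (fun i => v ≤ F i))
  rw [hu, hi] at this
  simp only [Finset.card_univ, Fintype.card_fin] at this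
  omega



/-- If `n = 4k+3` and `p = 2k+1` rows, columns, sum diagonals and difference
diagonals cover the `n × n` board, with `l, r` the extreme unchosen columns and
`b, t` the extreme unchosen rows, then the sum diagonal with value `l + t = r + b`
is chosen, and of the remaining `2k` chosen sum diagonals exactly `k` have larger
value and exactly `k` have smaller value; analogously for the difference diagonal
with value `l - b = r - t`. -/
theorem relaxed_queens_4k3_diagonal_split (k : ℕ)
    (R C : Fin (2 * k + 1) → ℕ) (S D : Fin (2 * k + 1) → ℤ)
    (hR : ∀ i, R i < 4 * k + 3) (hC : ∀ i, C i < 4 * k + 3)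
    (hcover : ∀ x y : ℕ, x < 4 * k + 3 → y < 4 * k + 3 →
      ∃ i, y = R i ∨ x = C i ∨ (x : ℤ) + y = S i ∨ (x : ℤ) - y = D i)
    (l r b t : ℕ)
    (hl : IsLeast {x : ℕ | x < 4 * k + 3 ∧ ∀ i, C i ≠ x} l)
    (hr : IsGreatest {x : ℕ | x < 4 * k + 3 ∧ ∀ i, C i ≠ x} r)
    (hb : IsLeast {y : ℕ | y < 4 * k + 3 ∧ ∀ i, R i ≠ y} b)
    (ht : IsGreatest {y : ℕ | y < 4 * k + 3 ∧ ∀ i, R i ≠ y} t) :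
    ((∃ i, S i = (l : ℤ) + t) ∧
      (Finset.univ.filter (fun i => S i > (l : ℤ) + t)).card = k ∧
      (Finset.univ.filter (fun i => S i < (l : ℤ) + t)).card = k) ∧
    ((∃ i, D i = (l : ℤ) - b) ∧
      (Finset.univ.filter (fun i => D i > (l : ℤ) - b)).card = k ∧
      (Finset.univ.filter (fun i => D i < (l : ℤ) - b)).card = k) := by
  classical
  set A : Finset ℕ := (Finset.range (4*k+3)).filter (fun x => ∀ i, C i ≠ x) with hAdef
  set B : Finset ℕ := (Finset.range (4*k+3)).filter (fun y => ∀ i, R i ≠ y) with hBdef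
  have memA : ∀ x : ℕ, x ∈ A ↔ x < 4*k+3 ∧ ∀ i, C i ≠ x := fun x => by
    simp [hAdef, Finset.mem_filter, Finset.mem_range]
  have memB : ∀ y : ℕ, y ∈ B ↔ y < 4*k+3 ∧ ∀ i, R i ≠ y := fun y => by
    simp [hBdef, Finset.mem_filter, Finset.mem_range]
  have hlA : l ∈ A := (memA l).2 hl.1
  have hrA : r ∈ A := (memA r).2 hr.1
  have hbB : b ∈ B := (memB b).2 hb.1
  have htB : t ∈ B := (memB t).2 ht.1
  have hlmin : ∀ x ∈ A, l ≤ x := fun x hx => hl.2 ((memA x).1 hx)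
  have hrmax : ∀ x ∈ A, x ≤ r := fun x hx => hr.2 ((memA x).1 hx)
  have hbmin : ∀ y ∈ B, b ≤ y := fun y hy => hb.2 ((memB y).1 hy)
  have htmax : ∀ y ∈ B, y ≤ t := fun y hy => ht.2 ((memB y).1 hy)
  have hcardA : 2*k+2 ≤ A.card := by
    have hsub : Finset.range (4*k+3) ⊆ A ∪ Finset.univ.image C := by
      intro x hx
      rcases Classical.em (∀ i, C i ≠ x) with h | h
      · exact Finset.mem_union_left _ ((memA x).2 ⟨Finset.mem_range.1 hx, h⟩)
      · push_neg at h
        obtain ⟨i, hi⟩ := h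
        exact Finset.mem_union_right _ (Finset.mem_image.2 ⟨i, Finset.mem_univ _, hi⟩)
    have h1 := Finset.card_le_card hsub
    have h2 := Finset.card_union_le A (Finset.univ.image C)
    have h3 := Finset.card_image_le (s := (Finset.univ : Finset (Fin (2*k+1)))) (f := C)
    rw [Finset.card_range] at h1
    simp only [Finset.card_univ, Fintype.card_fin] at h3
    omega
  have hcardB : 2*k+2 ≤ B.card := by
    have hsub : Finset.range (4*k+3) ⊆ B ∪ Finset.univ.image R := by
      intro y hy
      rcases Classical.em (∀ i, R i ≠ y) with h | h
      · exact Finset.mem_union_left _ ((memB y).2 ⟨Finset.mem_range.1 hy, h⟩)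
      · push_neg at h
        obtain ⟨i, hi⟩ := h
        exact Finset.mem_union_right _ (Finset.mem_image.2 ⟨i, Finset.mem_univ _, hi⟩)
    have h1 := Finset.card_le_card hsub
    have h2 := Finset.card_union_le B (Finset.univ.image R)
    have h3 := Finset.card_image_le (s := (Finset.univ : Finset (Fin (2*k+1)))) (f := R)
    rw [Finset.card_range] at h1
    simp only [Finset.card_univ, Fintype.card_fin] at h3
    omega
  have hlr : l < r := by
    rcases Finset.one_lt_card.1 (show 1 < A.card by omega) with ⟨x, hx, y, hy, hxy⟩
    have e1 := hlmin x hx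
    have e2 := hrmax x hx
    have e3 := hlmin y hy
    have e4 := hrmax y hy
    omega
  have hbt : b < t := by
    rcases Finset.one_lt_card.1 (show 1 < B.card by omega) with ⟨x, hx, y, hy, hxy⟩
    have e1 := hbmin x hx
    have e2 := htmax x hx
    have e3 := hbmin y hy
    have e4 := htmax y hy
    omega
  -- the boundary of the grid A ×ˢ B
  set Γ : Finset (ℕ × ℕ) := (({l, r} : Finset ℕ) ×ˢ B) ∪ (A ×ˢ ({b, t} : Finset ℕ)) with hΓdef
  have memΓ : ∀ z : ℕ × ℕ, z ∈ Γ ↔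
      ((z.1 = l ∨ z.1 = r) ∧ z.2 ∈ B) ∨ (z.1 ∈ A ∧ (z.2 = b ∨ z.2 = t)) := by
    intro z
    simp [hΓdef, Finset.mem_product]
  have hΓbounds : ∀ z ∈ Γ, z.1 ∈ A ∧ z.2 ∈ B ∧ l ≤ z.1 ∧ z.1 ≤ r ∧ b ≤ z.2 ∧ z.2 ≤ t := by
    intro z hz
    have h := (memΓ z).1 hz
    have h1 : z.1 ∈ A := by
      rcases h with ⟨h1, _⟩ | ⟨h1, _⟩
      · rcases h1 with h1 | h1 <;> rw [h1] <;> assumption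
      · exact h1
    have h2 : z.2 ∈ B := by
      rcases h with ⟨_, h2⟩ | ⟨_, h2⟩
      · exact h2
      · rcases h2 with h2 | h2 <;> rw [h2] <;> assumption
    exact ⟨h1, h2, hlmin _ h1, hrmax _ h1, hbmin _ h2, htmax _ h2⟩
  have hΓalt : ∀ z ∈ Γ, (z.1 = l ∨ z.1 = r) ∨ (z.2 = b ∨ z.2 = t) := by
    intro z hz
    rcases (memΓ z).1 hz with ⟨h1, _⟩ | ⟨_, h2⟩
    · exact Or.inl h1
    · exact Or.inr h2
  have halt' : ∀ z ∈ Γ, ¬(z.1 = l ∨ z.2 = t) → z.1 = r ∨ z.2 = b := by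
    intro z hz hq
    push_neg at hq
    rcases hΓalt z hz with (h | h) | (h | h)
    · exact absurd h hq.1
    · exact Or.inl h
    · exact Or.inr h
    · exact absurd h hq.2
  have halt'' : ∀ z ∈ Γ, ¬(z.1 = l ∨ z.2 = b) → z.1 = r ∨ z.2 = t := by
    intro z hz hq
    push_neg at hq
    rcases hΓalt z hz with (h | h) | (h | h)
    · exact absurd h hq.1
    · exact Or.inl h
    · exact absurd h hq.2
    · exact Or.inr h
  -- the covering function
  have hcovΓ : ∀ z : ℕ × ℕ, z ∈ Γ →
      ∃ j : Fin (2*k+1) ⊕ Fin (2*k+1),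
        Sum.elim (fun i => (z.1:ℤ) + z.2 = S i) (fun i => (z.1:ℤ) - z.2 = D i) j := by
    intro z hz
    obtain ⟨h1, h2, -, -, -, -⟩ := hΓbounds z hz
    obtain ⟨hx1, hx2⟩ := (memA z.1).1 h1
    obtain ⟨hy1, hy2⟩ := (memB z.2).1 h2
    obtain ⟨i, hi⟩ := hcover z.1 z.2 hx1 hy1
    rcases hi with h | h | h | h
    · exact absurd h.symm (hy2 i)
    · exact absurd h.symm (hx2 i)
    · exact ⟨Sum.inl i, h⟩
    · exact ⟨Sum.inr i, h⟩
  obtain ⟨f, hfspec⟩ : ∃ f : ℕ × ℕ → Fin (2*k+1) ⊕ Fin (2*k+1), ∀ z ∈ Γ,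
      Sum.elim (fun i => (z.1:ℤ) + z.2 = S i) (fun i => (z.1:ℤ) - z.2 = D i) (f z) := by
    choose g hg using hcovΓ
    exact ⟨fun z => if h : z ∈ Γ then g z h else Sum.inl ⟨0, by omega⟩,
      fun z hz => by simp only [dif_pos hz]; exact hg z hz⟩
  have hfS : ∀ z ∈ Γ, ∀ i, f z = Sum.inl i → (z.1:ℤ) + z.2 = S i := by
    intro z hz i hi
    have h := hfspec z hz
    rw [hi] at h
    exact h
  have hfD : ∀ z ∈ Γ, ∀ i, f z = Sum.inr i → (z.1:ℤ) - z.2 = D i := by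
    intro z hz i hi
    have h := hfspec z hz
    rw [hi] at h
    exact h
  -- uniqueness of cells on a line given side-class
  have hSuniq : ∀ z1 ∈ Γ, ∀ z2 ∈ Γ, (z1.1:ℤ) + z1.2 = (z2.1:ℤ) + z2.2 →
      ((z1.1 = l ∨ z1.2 = t) ↔ (z2.1 = l ∨ z2.2 = t)) → z1 = z2 := by
    intro z1 hz1 z2 hz2 hsum hiff
    obtain ⟨-, -, h11, h12, h13, h14⟩ := hΓbounds z1 hz1
    obtain ⟨-, -, h21, h22, h23, h24⟩ := hΓbounds z2 hz2
    by_cases hq1 : z1.1 = l ∨ z1.2 = t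
    · have hq2 := hiff.1 hq1
      rcases hq1 with h | h <;> rcases hq2 with h' | h' <;>
        exact Prod.ext_iff.2 ⟨by omega, by omega⟩
    · have hq2 : ¬(z2.1 = l ∨ z2.2 = t) := fun h => hq1 (hiff.2 h)
      have ha1 := halt' z1 hz1 hq1
      have ha2 := halt' z2 hz2 hq2
      rcases ha1 with h | h <;> rcases ha2 with h' | h' <;>
        exact Prod.ext_iff.2 ⟨by omega, by omega⟩
  have hDuniq : ∀ z1 ∈ Γ, ∀ z2 ∈ Γ, (z1.1:ℤ) - z1.2 = (z2.1:ℤ) - z2.2 →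
      ((z1.1 = l ∨ z1.2 = b) ↔ (z2.1 = l ∨ z2.2 = b)) → z1 = z2 := by
    intro z1 hz1 z2 hz2 hsum hiff
    obtain ⟨-, -, h11, h12, h13, h14⟩ := hΓbounds z1 hz1
    obtain ⟨-, -, h21, h22, h23, h24⟩ := hΓbounds z2 hz2
    by_cases hq1 : z1.1 = l ∨ z1.2 = b
    · have hq2 := hiff.1 hq1
      rcases hq1 with h | h <;> rcases hq2 with h' | h' <;>
        exact Prod.ext_iff.2 ⟨by omega, by omega⟩
    · have hq2 : ¬(z2.1 = l ∨ z2.2 = b) := fun h => hq1 (hiff.2 h)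
      have ha1 := halt'' z1 hz1 hq1
      have ha2 := halt'' z2 hz2 hq2
      rcases ha1 with h | h <;> rcases ha2 with h' | h' <;>
        exact Prod.ext_iff.2 ⟨by omega, by omega⟩
  -- each diagonal line contains at most two boundary cells
  have hlineS : ∀ s : ℤ, (Γ.filter (fun z => (z.1:ℤ) + z.2 = s)).card ≤ 2 := by
    intro s
    have h2 : (Γ.filter (fun z => (z.1:ℤ) + z.2 = s)).card ≤ (Finset.univ : Finset Bool).card := by
      apply Finset.card_le_card_of_injOn (fun z => decide (z.1 = l ∨ z.2 = t))
        (fun z _ => Finset.mem_univ _)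
      intro z1 h1 z2 h2 heq
      simp only [Finset.coe_filter, Set.mem_setOf_eq] at h1 h2
      exact hSuniq z1 h1.1 z2 h2.1 (by omega) (by simpa using decide_eq_decide.1 heq)
    simpa using h2
  have hlineD : ∀ d : ℤ, (Γ.filter (fun z => (z.1:ℤ) - z.2 = d)).card ≤ 2 := by
    intro d
    have h2 : (Γ.filter (fun z => (z.1:ℤ) - z.2 = d)).card ≤ (Finset.univ : Finset Bool).card := by
      apply Finset.card_le_card_of_injOn (fun z => decide (z.1 = l ∨ z.2 = b))
        (fun z _ => Finset.mem_univ _)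
      intro z1 h1 z2 h2 heq
      simp only [Finset.coe_filter, Set.mem_setOf_eq] at h1 h2
      exact hDuniq z1 h1.1 z2 h2.1 (by omega) (by simpa using decide_eq_decide.1 heq)
    simpa using h2
  -- cardinality of Γ
  have hΓcard_eq : Γ.card + 4 = 2 * B.card + 2 * A.card := by
    have hinter : ((({l, r} : Finset ℕ) ×ˢ B) ∩ (A ×ˢ ({b, t} : Finset ℕ)))
        = (({l, r} : Finset ℕ) ×ˢ ({b, t} : Finset ℕ)) := by
      rw [Finset.product_inter_product]
      congr 1
      · apply Finset.inter_eq_left.2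
        intro x hx
        rcases Finset.mem_insert.1 hx with h | h
        · rw [h]; exact hlA
        · rw [Finset.mem_singleton.1 h]; exact hrA
      · apply Finset.inter_eq_right.2
        intro y hy
        rcases Finset.mem_insert.1 hy with h | h
        · rw [h]; exact hbB
        · rw [Finset.mem_singleton.1 h]; exact htB
    have hu := Finset.card_union_add_card_inter
      ((({l, r} : Finset ℕ) ×ˢ B)) ((A ×ˢ ({b, t} : Finset ℕ)))
    rw [← hΓdef, hinter] at hu
    have hlrcard : ({l, r} : Finset ℕ).card = 2 := by
      rw [Finset.card_insert_of_notMem (by simp; omega), Finset.card_singleton]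
    have hbtcard : ({b, t} : Finset ℕ).card = 2 := by
      rw [Finset.card_insert_of_notMem (by simp; omega), Finset.card_singleton]
    rw [Finset.card_product, Finset.card_product, Finset.card_product, hlrcard, hbtcard] at hu
    omega
  -- fiber counting
  have hfible : ∀ j : Fin (2*k+1) ⊕ Fin (2*k+1), (Γ.filter (fun z => f z = j)).card ≤ 2 := by
    intro j
    rcases j with i | i
    · refine le_trans (Finset.card_le_card ?_) (hlineS (S i))
      intro z hz
      rw [Finset.mem_filter] at hz ⊢
      exact ⟨hz.1, hfS z hz.1 i hz.2⟩
    · refine le_trans (Finset.card_le_card ?_) (hlineD (D i))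
      intro z hz
      rw [Finset.mem_filter] at hz ⊢
      exact ⟨hz.1, hfD z hz.1 i hz.2⟩
  have hΓsum : Γ.card = ∑ j : Fin (2*k+1) ⊕ Fin (2*k+1), (Γ.filter (fun z => f z = j)).card :=
    Finset.card_eq_sum_card_fiberwise (fun z _ => Finset.mem_univ (f z))
  have hconstsum : (∑ _j : Fin (2*k+1) ⊕ Fin (2*k+1), 2) = 8*k+4 := by
    simp only [Finset.sum_const, Finset.card_univ, Fintype.card_sum, Fintype.card_fin,
      smul_eq_mul]
    omega
  have hΓle : Γ.card ≤ 8*k+4 := by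
    rw [hΓsum]
    calc ∑ j : Fin (2*k+1) ⊕ Fin (2*k+1), (Γ.filter (fun z => f z = j)).card
        ≤ ∑ _j : Fin (2*k+1) ⊕ Fin (2*k+1), 2 := Finset.sum_le_sum (fun j _ => hfible j)
      _ = 8*k+4 := hconstsum
  have hAcard : A.card = 2*k+2 := by omega
  have hBcard : B.card = 2*k+2 := by omega
  have hΓcard : Γ.card = 8*k+4 := by omega
  have hfib2 : ∀ j, (Γ.filter (fun z => f z = j)).card = 2 := by
    by_contra hcon
    push_neg at hcon
    obtain ⟨j0, hj0⟩ := hcon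
    have hlt : (∑ j : Fin (2*k+1) ⊕ Fin (2*k+1), (Γ.filter (fun z => f z = j)).card)
        < ∑ _j : Fin (2*k+1) ⊕ Fin (2*k+1), 2 :=
      Finset.sum_lt_sum (fun j _ => hfible j)
        ⟨j0, Finset.mem_univ _, lt_of_le_of_ne (hfible j0) hj0⟩
    rw [← hΓsum, hconstsum] at hlt
    omega
  -- each sum fiber has one cell on the left/top side and one on the right/bottom side
  have hSfiber : ∀ i : Fin (2*k+1),
      ∃ z1, (z1 ∈ Γ ∧ f z1 = Sum.inl i ∧ (z1.1 = l ∨ z1.2 = t)) ∧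
      ∃ z2, (z2 ∈ Γ ∧ f z2 = Sum.inl i ∧ (z2.1 = r ∨ z2.2 = b)) := by
    intro i
    obtain ⟨w1, w2, hne, hset⟩ := Finset.card_eq_two.1 (hfib2 (Sum.inl i))
    have hw1 : w1 ∈ Γ ∧ f w1 = Sum.inl i := by
      have hh : w1 ∈ Γ.filter (fun z => f z = Sum.inl i) := by rw [hset]; simp
      exact Finset.mem_filter.1 hh
    have hw2 : w2 ∈ Γ ∧ f w2 = Sum.inl i := by
      have hh : w2 ∈ Γ.filter (fun z => f z = Sum.inl i) := by rw [hset]; simp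
      exact Finset.mem_filter.1 hh
    have hl1 : (w1.1:ℤ) + w1.2 = S i := hfS w1 hw1.1 i hw1.2
    have hl2 : (w2.1:ℤ) + w2.2 = S i := hfS w2 hw2.1 i hw2.2
    by_cases hq1 : w1.1 = l ∨ w1.2 = t
    · refine ⟨w1, ⟨hw1.1, hw1.2, hq1⟩, w2, hw2.1, hw2.2, ?_⟩
      by_cases hq2 : w2.1 = l ∨ w2.2 = t
      · exact absurd (hSuniq w1 hw1.1 w2 hw2.1 (by omega) (iff_of_true hq1 hq2)) hne
      · exact halt' w2 hw2.1 hq2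
    · have hq2 : w2.1 = l ∨ w2.2 = t := by
        by_contra hq2
        exact hne (hSuniq w1 hw1.1 w2 hw2.1 (by omega) (iff_of_false hq1 hq2))
      exact ⟨w2, ⟨hw2.1, hw2.2, hq2⟩, w1, hw1.1, hw1.2, halt' w1 hw1.1 hq1⟩
  have hDfiber : ∀ i : Fin (2*k+1),
      ∃ z1, (z1 ∈ Γ ∧ f z1 = Sum.inr i ∧ (z1.1 = l ∨ z1.2 = b)) ∧
      ∃ z2, (z2 ∈ Γ ∧ f z2 = Sum.inr i ∧ (z2.1 = r ∨ z2.2 = t)) := by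
    intro i
    obtain ⟨w1, w2, hne, hset⟩ := Finset.card_eq_two.1 (hfib2 (Sum.inr i))
    have hw1 : w1 ∈ Γ ∧ f w1 = Sum.inr i := by
      have hh : w1 ∈ Γ.filter (fun z => f z = Sum.inr i) := by rw [hset]; simp
      exact Finset.mem_filter.1 hh
    have hw2 : w2 ∈ Γ ∧ f w2 = Sum.inr i := by
      have hh : w2 ∈ Γ.filter (fun z => f z = Sum.inr i) := by rw [hset]; simp
      exact Finset.mem_filter.1 hh
    have hl1 : (w1.1:ℤ) - w1.2 = D i := hfD w1 hw1.1 i hw1.2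
    have hl2 : (w2.1:ℤ) - w2.2 = D i := hfD w2 hw2.1 i hw2.2
    by_cases hq1 : w1.1 = l ∨ w1.2 = b
    · refine ⟨w1, ⟨hw1.1, hw1.2, hq1⟩, w2, hw2.1, hw2.2, ?_⟩
      by_cases hq2 : w2.1 = l ∨ w2.2 = b
      · exact absurd (hDuniq w1 hw1.1 w2 hw2.1 (by omega) (iff_of_true hq1 hq2)) hne
      · exact halt'' w2 hw2.1 hq2
    · have hq2 : w2.1 = l ∨ w2.2 = b := by
        by_contra hq2
        exact hne (hDuniq w1 hw1.1 w2 hw2.1 (by omega) (iff_of_false hq1 hq2))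
      exact ⟨w2, ⟨hw2.1, hw2.2, hq2⟩, w1, hw1.1, hw1.2, halt'' w1 hw1.1 hq1⟩
  -- injectivity of S and D
  have hSinj : ∀ i1 i2 : Fin (2*k+1), S i1 = S i2 → i1 = i2 := by
    intro i1 i2 hv
    by_contra hne
    have hdisj : Disjoint (Γ.filter (fun z => f z = Sum.inl i1))
        (Γ.filter (fun z => f z = Sum.inl i2)) := by
      rw [Finset.disjoint_left]
      intro z h1 h2
      rw [Finset.mem_filter] at h1 h2
      exact hne (Sum.inl.inj (h1.2.symm.trans h2.2))
    have hsub : (Γ.filter (fun z => f z = Sum.inl i1)) ∪ (Γ.filter (fun z => f z = Sum.inl i2))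
        ⊆ Γ.filter (fun z => (z.1:ℤ) + z.2 = S i1) := by
      intro z hz
      rcases Finset.mem_union.1 hz with h | h <;> rw [Finset.mem_filter] at h ⊢
      · exact ⟨h.1, hfS z h.1 _ h.2⟩
      · exact ⟨h.1, (hfS z h.1 _ h.2).trans hv.symm⟩
    have hc := Finset.card_le_card hsub
    rw [Finset.card_union_of_disjoint hdisj, hfib2, hfib2] at hc
    have := hlineS (S i1)
    omega
  have hDinj : ∀ i1 i2 : Fin (2*k+1), D i1 = D i2 → i1 = i2 := by
    intro i1 i2 hv
    by_contra hne
    have hdisj : Disjoint (Γ.filter (fun z => f z = Sum.inr i1))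
        (Γ.filter (fun z => f z = Sum.inr i2)) := by
      rw [Finset.disjoint_left]
      intro z h1 h2
      rw [Finset.mem_filter] at h1 h2
      exact hne (Sum.inr.inj (h1.2.symm.trans h2.2))
    have hsub : (Γ.filter (fun z => f z = Sum.inr i1)) ∪ (Γ.filter (fun z => f z = Sum.inr i2))
        ⊆ Γ.filter (fun z => (z.1:ℤ) - z.2 = D i1) := by
      intro z hz
      rcases Finset.mem_union.1 hz with h | h <;> rw [Finset.mem_filter] at h ⊢
      · exact ⟨h.1, hfD z h.1 _ h.2⟩
      · exact ⟨h.1, (hfD z h.1 _ h.2).trans hv.symm⟩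
    have hc := Finset.card_le_card hsub
    rw [Finset.card_union_of_disjoint hdisj, hfib2, hfib2] at hc
    have := hlineD (D i1)
    omega
  -- the corner diagonals are chosen
  have hltΓ : ((l, t) : ℕ × ℕ) ∈ Γ := (memΓ _).2 (Or.inl ⟨Or.inl rfl, htB⟩)
  have hlbΓ : ((l, b) : ℕ × ℕ) ∈ Γ := (memΓ _).2 (Or.inl ⟨Or.inl rfl, hbB⟩)
  have hexSu : ∃ i, S i = (l:ℤ) + (t:ℤ) := by
    rcases hfj : f (l, t) with i | i
    · exact ⟨i, (hfS (l,t) hltΓ i hfj).symm⟩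
    · exfalso
      have hd : ((l:ℤ) - (t:ℤ)) = D i := hfD (l,t) hltΓ i hfj
      have key : ∀ z ∈ Γ, f z = Sum.inr i → z = ((l, t) : ℕ × ℕ) := by
        intro z hz hfz
        have hdz : (z.1:ℤ) - z.2 = D i := hfD z hz i hfz
        obtain ⟨-, -, hb1, hb2, hb3, hb4⟩ := hΓbounds z hz
        exact Prod.ext_iff.2 ⟨by omega, by omega⟩
      obtain ⟨w1, w2, hne, hset⟩ := Finset.card_eq_two.1 (hfib2 (Sum.inr i))
      have hw1 : w1 ∈ Γ ∧ f w1 = Sum.inr i := by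
        have hh : w1 ∈ Γ.filter (fun z => f z = Sum.inr i) := by rw [hset]; simp
        exact Finset.mem_filter.1 hh
      have hw2 : w2 ∈ Γ ∧ f w2 = Sum.inr i := by
        have hh : w2 ∈ Γ.filter (fun z => f z = Sum.inr i) := by rw [hset]; simp
        exact Finset.mem_filter.1 hh
      exact hne ((key w1 hw1.1 hw1.2).trans (key w2 hw2.1 hw2.2).symm)
  have hexDu : ∃ i, D i = (l:ℤ) - (b:ℤ) := by
    rcases hfj : f (l, b) with i | i
    · exfalso
      have hd : ((l:ℤ) + (b:ℤ)) = S i := hfS (l,b) hlbΓ i hfj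
      have key : ∀ z ∈ Γ, f z = Sum.inl i → z = ((l, b) : ℕ × ℕ) := by
        intro z hz hfz
        have hdz : (z.1:ℤ) + z.2 = S i := hfS z hz i hfz
        obtain ⟨-, -, hb1, hb2, hb3, hb4⟩ := hΓbounds z hz
        exact Prod.ext_iff.2 ⟨by omega, by omega⟩
      obtain ⟨w1, w2, hne, hset⟩ := Finset.card_eq_two.1 (hfib2 (Sum.inl i))
      have hw1 : w1 ∈ Γ ∧ f w1 = Sum.inl i := by
        have hh : w1 ∈ Γ.filter (fun z => f z = Sum.inl i) := by rw [hset]; simp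
        exact Finset.mem_filter.1 hh
      have hw2 : w2 ∈ Γ ∧ f w2 = Sum.inl i := by
        have hh : w2 ∈ Γ.filter (fun z => f z = Sum.inl i) := by rw [hset]; simp
        exact Finset.mem_filter.1 hh
      exact hne ((key w1 hw1.1 hw1.2).trans (key w2 hw2.1 hw2.2).symm)
    · exact ⟨i, (hfD (l,b) hlbΓ i hfj).symm⟩
  -- edge L : cells (l, y)
  have hedgeL :
      (Finset.univ.filter (fun i => S i ≤ (l:ℤ) + (t:ℤ))).card
        + (Finset.univ.filter (fun i => D i ≤ (l:ℤ) - (b:ℤ))).card = 2*k+2 := by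
    have hEsub : (({l} : Finset ℕ) ×ˢ B) ⊆ Γ := by
      intro z hz
      rw [Finset.mem_product, Finset.mem_singleton] at hz
      exact (memΓ z).2 (Or.inl ⟨Or.inl hz.1, hz.2⟩)
    have hE : (({l} : Finset ℕ) ×ˢ B).card =
        (Finset.univ.filter (Sum.elim (fun i => S i ≤ (l:ℤ) + (t:ℤ)) (fun i => D i ≤ (l:ℤ) - (b:ℤ)))).card := by
      apply Finset.card_bij (fun z _ => f z)
      · intro z hz
        have hzΓ := hEsub hz
        rw [Finset.mem_product, Finset.mem_singleton] at hz
        obtain ⟨-, -, -, -, hzb, hzt⟩ := hΓbounds z hzΓ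
        rw [Finset.mem_filter]
        refine ⟨Finset.mem_univ _, ?_⟩
        rcases hfj : f z with i | i
        · have he := hfS z hzΓ i hfj
          simp only [Sum.elim_inl]
          omega
        · have he := hfD z hzΓ i hfj
          simp only [Sum.elim_inr]
          omega
      · intro z1 hz1 z2 hz2 heq
        have h1Γ := hEsub hz1
        have h2Γ := hEsub hz2
        rw [Finset.mem_product, Finset.mem_singleton] at hz1 hz2
        rcases hfj : f z1 with i | i
        · have hfj2 : f z2 = Sum.inl i := by rw [← heq, hfj]
          have e1 := hfS z1 h1Γ i hfj
          have e2 := hfS z2 h2Γ i hfj2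
          exact Prod.ext_iff.2 ⟨by omega, by omega⟩
        · have hfj2 : f z2 = Sum.inr i := by rw [← heq, hfj]
          have e1 := hfD z1 h1Γ i hfj
          have e2 := hfD z2 h2Γ i hfj2
          exact Prod.ext_iff.2 ⟨by omega, by omega⟩
      · intro j hj
        rw [Finset.mem_filter] at hj
        rcases j with i | i
        · have hcond : S i ≤ (l:ℤ) + (t:ℤ) := hj.2
          obtain ⟨z1, ⟨hz1Γ, hz1f, hz1q⟩, -⟩ := hSfiber i
          have hline := hfS z1 hz1Γ i hz1f
          obtain ⟨-, hz1B, hbl, -, -, hbt'⟩ := hΓbounds z1 hz1Γ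
          have hx : z1.1 = l := by
            rcases hz1q with h | h
            · exact h
            · omega
          exact ⟨z1, by rw [Finset.mem_product, Finset.mem_singleton]; exact ⟨hx, hz1B⟩, hz1f⟩
        · have hcond : D i ≤ (l:ℤ) - (b:ℤ) := hj.2
          obtain ⟨z1, ⟨hz1Γ, hz1f, hz1q⟩, -⟩ := hDfiber i
          have hline := hfD z1 hz1Γ i hz1f
          obtain ⟨-, hz1B, hbl, -, hbb', -⟩ := hΓbounds z1 hz1Γ
          have hx : z1.1 = l := by
            rcases hz1q with h | h
            · exact h
            · omega
          exact ⟨z1, by rw [Finset.mem_product, Finset.mem_singleton]; exact ⟨hx, hz1B⟩, hz1f⟩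
    rw [card_filter_sum_aux] at hE
    rw [Finset.card_product, Finset.card_singleton, one_mul, hBcard] at hE
    omega
  -- edge R : cells (r, y)
  have hedgeR :
      (Finset.univ.filter (fun i => (r:ℤ) + (b:ℤ) ≤ S i)).card
        + (Finset.univ.filter (fun i => (r:ℤ) - (t:ℤ) ≤ D i)).card = 2*k+2 := by
    have hEsub : (({r} : Finset ℕ) ×ˢ B) ⊆ Γ := by
      intro z hz
      rw [Finset.mem_product, Finset.mem_singleton] at hz
      exact (memΓ z).2 (Or.inl ⟨Or.inr hz.1, hz.2⟩)
    have hE : (({r} : Finset ℕ) ×ˢ B).card =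
        (Finset.univ.filter (Sum.elim (fun i => (r:ℤ) + (b:ℤ) ≤ S i) (fun i => (r:ℤ) - (t:ℤ) ≤ D i))).card := by
      apply Finset.card_bij (fun z _ => f z)
      · intro z hz
        have hzΓ := hEsub hz
        rw [Finset.mem_product, Finset.mem_singleton] at hz
        obtain ⟨-, -, -, -, hzb, hzt⟩ := hΓbounds z hzΓ
        rw [Finset.mem_filter]
        refine ⟨Finset.mem_univ _, ?_⟩
        rcases hfj : f z with i | i
        · have he := hfS z hzΓ i hfj
          simp only [Sum.elim_inl]
          omega
        · have he := hfD z hzΓ i hfj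
          simp only [Sum.elim_inr]
          omega
      · intro z1 hz1 z2 hz2 heq
        have h1Γ := hEsub hz1
        have h2Γ := hEsub hz2
        rw [Finset.mem_product, Finset.mem_singleton] at hz1 hz2
        rcases hfj : f z1 with i | i
        · have hfj2 : f z2 = Sum.inl i := by rw [← heq, hfj]
          have e1 := hfS z1 h1Γ i hfj
          have e2 := hfS z2 h2Γ i hfj2
          exact Prod.ext_iff.2 ⟨by omega, by omega⟩
        · have hfj2 : f z2 = Sum.inr i := by rw [← heq, hfj]
          have e1 := hfD z1 h1Γ i hfj
          have e2 := hfD z2 h2Γ i hfj2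
          exact Prod.ext_iff.2 ⟨by omega, by omega⟩
      · intro j hj
        rw [Finset.mem_filter] at hj
        rcases j with i | i
        · have hcond : (r:ℤ) + (b:ℤ) ≤ S i := hj.2
          obtain ⟨-, -, z2, hz2Γ, hz2f, hz2q⟩ := hSfiber i
          have hline := hfS z2 hz2Γ i hz2f
          obtain ⟨-, hz2B, -, hbr, hbb', -⟩ := hΓbounds z2 hz2Γ
          have hx : z2.1 = r := by
            rcases hz2q with h | h
            · exact h
            · omega
          exact ⟨z2, by rw [Finset.mem_product, Finset.mem_singleton]; exact ⟨hx, hz2B⟩, hz2f⟩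
        · have hcond : (r:ℤ) - (t:ℤ) ≤ D i := hj.2
          obtain ⟨-, -, z2, hz2Γ, hz2f, hz2q⟩ := hDfiber i
          have hline := hfD z2 hz2Γ i hz2f
          obtain ⟨-, hz2B, -, hbr, -, hbt'⟩ := hΓbounds z2 hz2Γ
          have hx : z2.1 = r := by
            rcases hz2q with h | h
            · exact h
            · omega
          exact ⟨z2, by rw [Finset.mem_product, Finset.mem_singleton]; exact ⟨hx, hz2B⟩, hz2f⟩
    rw [card_filter_sum_aux] at hE
    rw [Finset.card_product, Finset.card_singleton, one_mul, hBcard] at hE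
    omega
  -- edge T : cells (x, t)
  have hedgeT :
      (Finset.univ.filter (fun i => (l:ℤ) + (t:ℤ) ≤ S i)).card
        + (Finset.univ.filter (fun i => D i ≤ (r:ℤ) - (t:ℤ))).card = 2*k+2 := by
    have hEsub : (A ×ˢ ({t} : Finset ℕ)) ⊆ Γ := by
      intro z hz
      rw [Finset.mem_product, Finset.mem_singleton] at hz
      exact (memΓ z).2 (Or.inr ⟨hz.1, Or.inr hz.2⟩)
    have hE : (A ×ˢ ({t} : Finset ℕ)).card =
        (Finset.univ.filter (Sum.elim (fun i => (l:ℤ) + (t:ℤ) ≤ S i) (fun i => D i ≤ (r:ℤ) - (t:ℤ)))).card := by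
      apply Finset.card_bij (fun z _ => f z)
      · intro z hz
        have hzΓ := hEsub hz
        rw [Finset.mem_product, Finset.mem_singleton] at hz
        obtain ⟨-, -, hzl, hzr, -, -⟩ := hΓbounds z hzΓ
        rw [Finset.mem_filter]
        refine ⟨Finset.mem_univ _, ?_⟩
        rcases hfj : f z with i | i
        · have he := hfS z hzΓ i hfj
          simp only [Sum.elim_inl]
          omega
        · have he := hfD z hzΓ i hfj
          simp only [Sum.elim_inr]
          omega
      · intro z1 hz1 z2 hz2 heq
        have h1Γ := hEsub hz1
        have h2Γ := hEsub hz2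
        rw [Finset.mem_product, Finset.mem_singleton] at hz1 hz2
        rcases hfj : f z1 with i | i
        · have hfj2 : f z2 = Sum.inl i := by rw [← heq, hfj]
          have e1 := hfS z1 h1Γ i hfj
          have e2 := hfS z2 h2Γ i hfj2
          exact Prod.ext_iff.2 ⟨by omega, by omega⟩
        · have hfj2 : f z2 = Sum.inr i := by rw [← heq, hfj]
          have e1 := hfD z1 h1Γ i hfj
          have e2 := hfD z2 h2Γ i hfj2
          exact Prod.ext_iff.2 ⟨by omega, by omega⟩
      · intro j hj
        rw [Finset.mem_filter] at hj
        rcases j with i | i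
        · have hcond : (l:ℤ) + (t:ℤ) ≤ S i := hj.2
          obtain ⟨z1, ⟨hz1Γ, hz1f, hz1q⟩, -⟩ := hSfiber i
          have hline := hfS z1 hz1Γ i hz1f
          obtain ⟨hz1A, -, hbl, -, -, hbt'⟩ := hΓbounds z1 hz1Γ
          have hy : z1.2 = t := by
            rcases hz1q with h | h
            · omega
            · exact h
          exact ⟨z1, by rw [Finset.mem_product, Finset.mem_singleton]; exact ⟨hz1A, hy⟩, hz1f⟩
        · have hcond : D i ≤ (r:ℤ) - (t:ℤ) := hj.2
          obtain ⟨-, -, z2, hz2Γ, hz2f, hz2q⟩ := hDfiber i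
          have hline := hfD z2 hz2Γ i hz2f
          obtain ⟨hz2A, -, -, hbr, -, hbt'⟩ := hΓbounds z2 hz2Γ
          have hy : z2.2 = t := by
            rcases hz2q with h | h
            · omega
            · exact h
          exact ⟨z2, by rw [Finset.mem_product, Finset.mem_singleton]; exact ⟨hz2A, hy⟩, hz2f⟩
    rw [card_filter_sum_aux] at hE
    rw [Finset.card_product, Finset.card_singleton, mul_one, hAcard] at hE
    omega
  -- edge B : cells (x, b)
  have hedgeB :
      (Finset.univ.filter (fun i => S i ≤ (r:ℤ) + (b:ℤ))).card
        + (Finset.univ.filter (fun i => (l:ℤ) - (b:ℤ) ≤ D i)).card = 2*k+2 := by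
    have hEsub : (A ×ˢ ({b} : Finset ℕ)) ⊆ Γ := by
      intro z hz
      rw [Finset.mem_product, Finset.mem_singleton] at hz
      exact (memΓ z).2 (Or.inr ⟨hz.1, Or.inl hz.2⟩)
    have hE : (A ×ˢ ({b} : Finset ℕ)).card =
        (Finset.univ.filter (Sum.elim (fun i => S i ≤ (r:ℤ) + (b:ℤ)) (fun i => (l:ℤ) - (b:ℤ) ≤ D i))).card := by
      apply Finset.card_bij (fun z _ => f z)
      · intro z hz
        have hzΓ := hEsub hz
        rw [Finset.mem_product, Finset.mem_singleton] at hz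
        obtain ⟨-, -, hzl, hzr, -, -⟩ := hΓbounds z hzΓ
        rw [Finset.mem_filter]
        refine ⟨Finset.mem_univ _, ?_⟩
        rcases hfj : f z with i | i
        · have he := hfS z hzΓ i hfj
          simp only [Sum.elim_inl]
          omega
        · have he := hfD z hzΓ i hfj
          simp only [Sum.elim_inr]
          omega
      · intro z1 hz1 z2 hz2 heq
        have h1Γ := hEsub hz1
        have h2Γ := hEsub hz2
        rw [Finset.mem_product, Finset.mem_singleton] at hz1 hz2
        rcases hfj : f z1 with i | i
        · have hfj2 : f z2 = Sum.inl i := by rw [← heq, hfj]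
          have e1 := hfS z1 h1Γ i hfj
          have e2 := hfS z2 h2Γ i hfj2
          exact Prod.ext_iff.2 ⟨by omega, by omega⟩
        · have hfj2 : f z2 = Sum.inr i := by rw [← heq, hfj]
          have e1 := hfD z1 h1Γ i hfj
          have e2 := hfD z2 h2Γ i hfj2
          exact Prod.ext_iff.2 ⟨by omega, by omega⟩
      · intro j hj
        rw [Finset.mem_filter] at hj
        rcases j with i | i
        · have hcond : S i ≤ (r:ℤ) + (b:ℤ) := hj.2
          obtain ⟨-, -, z2, hz2Γ, hz2f, hz2q⟩ := hSfiber i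
          have hline := hfS z2 hz2Γ i hz2f
          obtain ⟨hz2A, -, -, hbr, hbb', -⟩ := hΓbounds z2 hz2Γ
          have hy : z2.2 = b := by
            rcases hz2q with h | h
            · omega
            · exact h
          exact ⟨z2, by rw [Finset.mem_product, Finset.mem_singleton]; exact ⟨hz2A, hy⟩, hz2f⟩
        · have hcond : (l:ℤ) - (b:ℤ) ≤ D i := hj.2
          obtain ⟨z1, ⟨hz1Γ, hz1f, hz1q⟩, -⟩ := hDfiber i
          have hline := hfD z1 hz1Γ i hz1f
          obtain ⟨hz1A, -, hbl, -, hbb', -⟩ := hΓbounds z1 hz1Γ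
          have hy : z1.2 = b := by
            rcases hz1q with h | h
            · omega
            · exact h
          exact ⟨z1, by rw [Finset.mem_product, Finset.mem_singleton]; exact ⟨hz1A, hy⟩, hz1f⟩
    rw [card_filter_sum_aux] at hE
    rw [Finset.card_product, Finset.card_singleton, mul_one, hAcard] at hE
    omega
  -- multiplicity one for the corner diagonal values
  have hmultS : ∀ v : ℤ, (Finset.univ.filter (fun i => S i = v)).card ≤ 1 := by
    intro v
    apply Finset.card_le_one.2
    intro i1 h1 i2 h2
    rw [Finset.mem_filter] at h1 h2
    exact hSinj i1 i2 (h1.2.trans h2.2.symm)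
  have hmultD : ∀ v : ℤ, (Finset.univ.filter (fun i => D i = v)).card ≤ 1 := by
    intro v
    apply Finset.card_le_one.2
    intro i1 h1 i2 h2
    rw [Finset.mem_filter] at h1 h2
    exact hDinj i1 i2 (h1.2.trans h2.2.symm)
  have hmSu : (Finset.univ.filter (fun i => S i = (l:ℤ) + (t:ℤ))).card = 1 := by
    obtain ⟨i, hi⟩ := hexSu
    have h1 : i ∈ Finset.univ.filter (fun i => S i = (l:ℤ) + (t:ℤ)) := by
      rw [Finset.mem_filter]; exact ⟨Finset.mem_univ _, hi⟩
    have h2 := Finset.card_pos.2 ⟨i, h1⟩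
    have h3 := hmultS ((l:ℤ) + (t:ℤ))
    omega
  have hmDu : (Finset.univ.filter (fun i => D i = (l:ℤ) - (b:ℤ))).card = 1 := by
    obtain ⟨i, hi⟩ := hexDu
    have h1 : i ∈ Finset.univ.filter (fun i => D i = (l:ℤ) - (b:ℤ)) := by
      rw [Finset.mem_filter]; exact ⟨Finset.mem_univ _, hi⟩
    have h2 := Finset.card_pos.2 ⟨i, h1⟩
    have h3 := hmultD ((l:ℤ) - (b:ℤ))
    omega
  -- the two corner diagonals coincide
  have huv : (l:ℤ) + (t:ℤ) = (r:ℤ) + (b:ℤ) := by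
    by_contra hne
    rcases lt_or_gt_of_ne hne with hlt | hgt
    · have h1 := card_filter_add_card_filter_le (fun i => S i ≤ (l:ℤ) + (t:ℤ))
        (fun i => (r:ℤ) + (b:ℤ) ≤ S i) (fun i hp hq => by omega)
      have h2 := card_filter_add_card_filter_le (fun i => D i ≤ (l:ℤ) - (b:ℤ))
        (fun i => (r:ℤ) - (t:ℤ) ≤ D i) (fun i hp hq => by omega)
      omega
    · have h1 := card_filter_add_card_filter_le (fun i => (l:ℤ) + (t:ℤ) ≤ S i)
        (fun i => S i ≤ (r:ℤ) + (b:ℤ)) (fun i hp hq => by omega)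
      have h2 := card_filter_add_card_filter_le (fun i => D i ≤ (r:ℤ) - (t:ℤ))
        (fun i => (l:ℤ) - (b:ℤ) ≤ D i) (fun i hp hq => by omega)
      omega
  have hu'v' : (l:ℤ) - (b:ℤ) = (r:ℤ) - (t:ℤ) := by omega
  rw [← huv] at hedgeB
  rw [← hu'v'] at hedgeT
  -- partitions of the index set
  have hpS := card_filter_le_add_card_filter_ge ((l:ℤ) + (t:ℤ)) S
  have hpD := card_filter_le_add_card_filter_ge ((l:ℤ) - (b:ℤ)) D
  have hg1 := card_filter_add_card_filter_eq (fun i => S i > (l:ℤ) + (t:ℤ))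
    (fun i => S i ≤ (l:ℤ) + (t:ℤ)) (fun i => ⟨fun h h' => by omega, fun h => by omega⟩)
  have hg2 := card_filter_add_card_filter_eq (fun i => S i < (l:ℤ) + (t:ℤ))
    (fun i => (l:ℤ) + (t:ℤ) ≤ S i) (fun i => ⟨fun h h' => by omega, fun h => by omega⟩)
  have hg3 := card_filter_add_card_filter_eq (fun i => D i > (l:ℤ) - (b:ℤ))
    (fun i => D i ≤ (l:ℤ) - (b:ℤ)) (fun i => ⟨fun h h' => by omega, fun h => by omega⟩)
  have hg4 := card_filter_add_card_filter_eq (fun i => D i < (l:ℤ) - (b:ℤ))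
    (fun i => (l:ℤ) - (b:ℤ) ≤ D i) (fun i => ⟨fun h h' => by omega, fun h => by omega⟩)
  exact ⟨⟨hexSu, by omega, by omega⟩, ⟨hexDu, by omega, by omega⟩⟩
end
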